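/- arXiv:0909.2184 — 4 statements merged into one kernel-verified Lean document; each statement's English description precedes it below -/
import Mathlib

section
/- Let J ⊆ S = K[x_0,…,x_n] be a strongly stable monomial ideal generated by s monomials of degree r, and let P be a natural number such that dim_K (S/J)_{r+1} ≤ P. Then the following are equivalent: (a) dim_K (S/J)_{r+1} = P; (b) there exists a homogeneous ideal I ⊆ S, generated by its degree-r homogeneous component, such that I_r is a vector-space complement of ⟨N(J)_r⟩ in S_r and dim_K (S/I)_{r+1} = P. -/
open MvPolynomial

namespace Stmt10Aux

variable {K : Type*} [Field K] {ι : Type*}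

def fdeg (γ : ι →₀ ℕ) : ℕ := γ.sum fun _ e => e

lemma fdeg_eq_degree (γ : ι →₀ ℕ) : fdeg γ = γ.degree := rfl

lemma fdeg_add (a b : ι →₀ ℕ) : fdeg (a + b) = fdeg a + fdeg b :=
  Finsupp.sum_add_index' (fun _ => rfl) (fun _ _ _ => rfl)

lemma fdeg_single (i : ι) (k : ℕ) : fdeg (Finsupp.single i k) = k :=
  Finsupp.sum_single_index rfl

lemma fdeg_eq_zero {γ : ι →₀ ℕ} (h : fdeg γ = 0) : γ = 0 :=
  (Finsupp.degree_eq_zero_iff γ).mp h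

lemma fdeg_one {c : ι →₀ ℕ} (h : fdeg c = 1) : ∃ j, c = Finsupp.single j 1 := by
  have hne : c ≠ 0 := by rintro rfl; simp [fdeg] at h
  obtain ⟨j, hj⟩ := Finsupp.support_nonempty_iff.mpr hne
  have hj1 : 1 ≤ c j := Nat.one_le_iff_ne_zero.mpr (Finsupp.mem_support_iff.mp hj)
  have hle : Finsupp.single j 1 ≤ c := by
    rw [Finsupp.single_le_iff]; exact hj1
  have hc : c - Finsupp.single j 1 + Finsupp.single j 1 = c := tsub_add_cancel_of_le hle
  have h2 := fdeg_add (c - Finsupp.single j 1) (Finsupp.single j 1)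
  rw [hc, h, fdeg_single] at h2
  have h0 : c - Finsupp.single j 1 = 0 := fdeg_eq_zero (by omega)
  exact ⟨j, by rw [← hc, h0, zero_add]⟩

lemma eq_of_le_of_fdeg_eq {b c : ι →₀ ℕ} (h : b ≤ c) (hd : fdeg b = fdeg c) : b = c := by
  have hc : b + (c - b) = c := add_tsub_cancel_of_le h
  have : fdeg b + fdeg (c - b) = fdeg c := by rw [← fdeg_add, hc]
  have h0 : c - b = 0 := fdeg_eq_zero (by omega)
  rw [← hc, h0, add_zero]

/-- elements of a span of monomials have coefficients supported on the exponent set -/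
lemma coeff_eq_zero_of_mem_span {A : Set (ι →₀ ℕ)} {p : MvPolynomial ι K}
    (hp : p ∈ Submodule.span K ((fun γ => (monomial γ (1 : K) : MvPolynomial ι K)) '' A))
    {γ : ι →₀ ℕ} (hγ : γ ∉ A) : coeff γ p = 0 := by
  classical
  induction hp using Submodule.span_induction with
  | mem x hx =>
    obtain ⟨a, ha, rfl⟩ := hx
    rw [coeff_monomial, if_neg]
    rintro rfl; exact hγ ha
  | zero => simp
  | add x y hx hy ihx ihy => simp [coeff_add, ihx, ihy]
  | smul a x hx ihx => simp [coeff_smul, ihx]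

/-- monomial membership criterion in a monomial ideal -/
lemma mono_mem_iff {B : Set (ι →₀ ℕ)} {γ : ι →₀ ℕ} :
    (monomial γ (1 : K) : MvPolynomial ι K) ∈
      Ideal.span ((fun a => (monomial a (1 : K) : MvPolynomial ι K)) '' B) ↔
    ∃ b ∈ B, b ≤ γ := by
  classical
  rw [mem_ideal_span_monomial_image]
  constructor
  · intro h
    exact h γ (by simp [support_monomial, one_ne_zero])
  · intro h xi hxi
    rw [support_monomial, if_neg one_ne_zero, Finset.mem_singleton] at hxi
    subst hxi; exact h

/-- the homogeneous submodule is the span of degree-d monomials -/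
lemma homog_eq_span (d : ℕ) :
    homogeneousSubmodule ι K d =
      Submodule.span K ((fun γ => (monomial γ (1 : K) : MvPolynomial ι K)) ''
        {γ | fdeg γ = d}) := by
  apply le_antisymm
  · intro p hp
    rw [mem_homogeneousSubmodule] at hp
    rw [p.as_sum]
    apply Submodule.sum_mem
    intro m hm
    have hdm : fdeg m = d := by
      have := hp (mem_support_iff.mp hm)
      rw [fdeg_eq_degree, Finsupp.degree_eq_weight_one]; exact this
    have : (monomial m (coeff m p) : MvPolynomial ι K) = coeff m p • monomial m 1 := by
      rw [smul_monomial, smul_eq_mul, mul_one]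
    rw [this]
    exact Submodule.smul_mem _ _ (Submodule.subset_span ⟨m, hdm, rfl⟩)
  · rw [Submodule.span_le]
    rintro x ⟨γ, hγ, rfl⟩
    rw [SetLike.mem_coe, mem_homogeneousSubmodule]
    exact isHomogeneous_monomial 1 ((fdeg_eq_degree γ).symm.trans hγ)

/-- intersection of a monomial ideal with the degree-d homogeneous part is spanned by the
degree-d monomials of the ideal -/
lemma ideal_inf_homog {B : Set (ι →₀ ℕ)} {J : Ideal (MvPolynomial ι K)}
    (hJ : J = Ideal.span ((fun a => (monomial a (1 : K) : MvPolynomial ι K)) '' B)) (d : ℕ) :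
    Submodule.restrictScalars K J ⊓ homogeneousSubmodule ι K d =
      Submodule.span K ((fun γ => (monomial γ (1 : K) : MvPolynomial ι K)) ''
        {γ | fdeg γ = d ∧ (monomial γ (1 : K) : MvPolynomial ι K) ∈ J}) := by
  classical
  apply le_antisymm
  · rintro p ⟨hpJ, hph⟩
    rw [SetLike.mem_coe, Submodule.restrictScalars_mem] at hpJ
    rw [SetLike.mem_coe, mem_homogeneousSubmodule] at hph
    rw [p.as_sum]
    apply Submodule.sum_mem
    intro m hm
    have hdm : fdeg m = d := by
      have := hph (mem_support_iff.mp hm)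
      rw [fdeg_eq_degree, Finsupp.degree_eq_weight_one]; exact this
    have hmJ : (monomial m (1 : K) : MvPolynomial ι K) ∈ J := by
      rw [hJ] at hpJ ⊢
      rw [mem_ideal_span_monomial_image] at hpJ ⊢
      intro xi hxi
      rw [support_monomial, if_neg one_ne_zero, Finset.mem_singleton] at hxi
      exact hxi ▸ hpJ m hm
    have : (monomial m (coeff m p) : MvPolynomial ι K) = coeff m p • monomial m 1 := by
      rw [smul_monomial, smul_eq_mul, mul_one]
    rw [this]
    exact Submodule.smul_mem _ _ (Submodule.subset_span ⟨m, ⟨hdm, hmJ⟩, rfl⟩)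
  · rw [Submodule.span_le]
    rintro x ⟨γ, ⟨hγd, hγJ⟩, rfl⟩
    refine ⟨?_, ?_⟩
    · rw [SetLike.mem_coe, Submodule.restrictScalars_mem]; exact hγJ
    · rw [SetLike.mem_coe, mem_homogeneousSubmodule]
      exact isHomogeneous_monomial 1 hγd

/-- finrank of the span of a finite set of monomials is its cardinality -/
lemma finrank_span_mono (A : Finset (ι →₀ ℕ)) :
    Module.finrank K (Submodule.span K
      ((fun γ => (monomial γ (1 : K) : MvPolynomial ι K)) '' (A : Set (ι →₀ ℕ)))) = A.card := by
  classical
  have hli : LinearIndependent K (fun γ : (A : Set (ι →₀ ℕ)) =>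
      (monomial γ.1 (1 : K) : MvPolynomial ι K)) := by
    have hb := (basisMonomials ι K).linearIndependent
    have := hb.comp (Subtype.val (p := fun x => x ∈ (A : Set (ι →₀ ℕ)))) Subtype.val_injective
    simp only [coe_basisMonomials] at this; exact this
  have h2 := finrank_span_eq_card hli
  rw [Set.image_eq_range]
  rw [h2]
  simp


set_option maxHeartbeats 1000000 in
lemma growth {K : Type*} [Field K] {n : ℕ} (r : ℕ) (B : Finset (Fin (n + 1) →₀ ℕ))
    (hBdeg : ∀ α ∈ B, α.sum (fun _ e => e) = r)
    (J : Ideal (MvPolynomial (Fin (n + 1)) K))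
    (hJ : J = Ideal.span ((fun a : Fin (n + 1) →₀ ℕ => (monomial a (1 : K) :
      MvPolynomial (Fin (n + 1)) K)) '' ↑B))
    (hSS : ∀ β : Fin (n + 1) →₀ ℕ, monomial β (1 : K) ∈ J →
      ∀ i j : Fin (n + 1), i < j → β i ≠ 0 →
        monomial (β - Finsupp.single i 1 + Finsupp.single j 1) (1 : K) ∈ J)
    (V : Submodule K (MvPolynomial (Fin (n + 1)) K))
    (hV1 : V ≤ homogeneousSubmodule (Fin (n + 1)) K r)
    (hV3 : V ⊔ Submodule.span K ((fun γ : Fin (n + 1) →₀ ℕ => (monomial γ (1 : K) :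
          MvPolynomial (Fin (n + 1)) K)) '' {γ | γ.sum (fun _ e => e) = r ∧ γ ∉ B})
          = homogeneousSubmodule (Fin (n + 1)) K r) :
    Module.finrank K
        ↥(Submodule.restrictScalars K J ⊓ homogeneousSubmodule (Fin (n + 1)) K (r + 1)) ≤
    Module.finrank K
        ↥(Submodule.restrictScalars K (Ideal.span (V : Set (MvPolynomial (Fin (n + 1)) K)))
          ⊓ homogeneousSubmodule (Fin (n + 1)) K (r + 1)) := by
  classical
  set NB : Set (Fin (n + 1) →₀ ℕ) := {γ | γ.sum (fun _ e => e) = r ∧ γ ∉ B} with hNB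
  set T : Finset (Fin (n + 1) →₀ ℕ) := (Finset.finsuppAntidiag Finset.univ (r + 1)).filter
      (fun γ => (monomial γ (1 : K) : MvPolynomial (Fin (n + 1)) K) ∈ J) with hT
  have hTmem : ∀ γ, γ ∈ T ↔ fdeg γ = r + 1 ∧
      (monomial γ (1 : K) : MvPolynomial (Fin (n + 1)) K) ∈ J := by
    intro γ
    rw [hT, Finset.mem_filter, Finset.mem_finsuppAntidiag']
    simp [fdeg]
  -- the J-side has dimension T.card
  have hLHSset : {γ | fdeg γ = r + 1 ∧
      (monomial γ (1 : K) : MvPolynomial (Fin (n + 1)) K) ∈ J} = (T : Set _) := by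
    ext γ; simp [hTmem γ]
  have hrank1 : Module.finrank K
      ↥(Submodule.restrictScalars K J ⊓ homogeneousSubmodule (Fin (n + 1)) K (r + 1))
      = T.card := by
    rw [ideal_inf_homog hJ (r + 1), hLHSset, finrank_span_mono]
  -- finite dimensionality of the degree r+1 homogeneous part
  have hhf : homogeneousSubmodule (Fin (n + 1)) K (r + 1) =
      Submodule.span K ((fun γ => (monomial γ (1 : K) : MvPolynomial (Fin (n + 1)) K)) ''
        ((Finset.finsuppAntidiag (Finset.univ : Finset (Fin (n + 1))) (r + 1) : Finset _) :
          Set (Fin (n + 1) →₀ ℕ))) := by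
    rw [homog_eq_span]
    congr 1
    apply congrArg
    ext γ
    simp only [Set.mem_setOf_eq, Finset.mem_coe, Finset.mem_finsuppAntidiag']
    simp [fdeg]
  haveI hfd : FiniteDimensional K ↥(homogeneousSubmodule (Fin (n + 1)) K (r + 1)) := by
    rw [hhf]
    exact FiniteDimensional.span_of_finite K ((Finset.finite_toSet _).image _)
  haveI hfdW : FiniteDimensional K
      ↥(Submodule.restrictScalars K (Ideal.span (V : Set (MvPolynomial (Fin (n + 1)) K)))
        ⊓ homogeneousSubmodule (Fin (n + 1)) K (r + 1)) :=
    Submodule.finiteDimensional_of_le inf_le_right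
  -- basic membership facts
  have hBJ : ∀ b ∈ B, (monomial b (1 : K) : MvPolynomial (Fin (n + 1)) K) ∈ J := by
    intro b hb; rw [hJ]; exact Ideal.subset_span ⟨b, hb, rfl⟩
  have hJr : ∀ γ : Fin (n + 1) →₀ ℕ, fdeg γ = r →
      ((monomial γ (1 : K) : MvPolynomial (Fin (n + 1)) K) ∈ J ↔ γ ∈ B) := by
    intro γ hγ
    constructor
    · intro h
      rw [hJ] at h
      obtain ⟨b, hb, hle⟩ := mono_mem_iff.mp h
      have hbγ : b = γ := eq_of_le_of_fdeg_eq hle (((hBdeg b hb).trans hγ.symm))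
      exact hbγ ▸ hb
    · intro h; exact hBJ γ h
  -- minimal variable index
  set idx : (Fin (n + 1) →₀ ℕ) → Fin (n + 1) :=
    fun γ => if h : γ.support.Nonempty then γ.support.min' h else 0 with hidxdef
  have hidx : ∀ (γ : Fin (n + 1) →₀ ℕ) (i : Fin (n + 1)), γ i ≠ 0 →
      idx γ ∈ γ.support ∧ idx γ ≤ i := by
    intro γ i hi
    have hne : γ.support.Nonempty := ⟨i, Finsupp.mem_support_iff.mpr hi⟩
    rw [hidxdef]
    simp only [dif_pos hne]
    exact ⟨Finset.min'_mem _ _, Finset.min'_le _ _ (Finsupp.mem_support_iff.mpr hi)⟩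
  -- key decomposition of degree r+1 monomials of J
  have key : ∀ γ ∈ T, ∃ m ∈ B, γ = m + Finsupp.single (idx γ) 1 := by
    intro γ hγT
    obtain ⟨hγd, hγJ⟩ := (hTmem γ).mp hγT
    rw [hJ] at hγJ
    obtain ⟨b, hb, hle⟩ := mono_mem_iff.mp hγJ
    have hbd : fdeg b = r := hBdeg b hb
    have hadd : b + (γ - b) = γ := add_tsub_cancel_of_le hle
    have hdc : fdeg (γ - b) = 1 := by
      have h2 := fdeg_add b (γ - b)
      rw [hadd, hγd, hbd] at h2
      omega
    obtain ⟨j, hj⟩ := fdeg_one hdc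
    have hγbj : γ = b + Finsupp.single j 1 := by rw [← hadd, hj]
    have hγj : γ j ≠ 0 := by
      rw [hγbj]; simp [Finsupp.add_apply, Finsupp.single_apply]
    obtain ⟨hmem, hle'⟩ := hidx γ j hγj
    obtain ⟨i, hi⟩ : ∃ i, idx γ = i := ⟨_, rfl⟩
    rw [hi] at hmem hle' ⊢
    rcases lt_or_eq_of_le hle' with hlt | heq
    · -- strictly smaller minimal variable: use strong stability
      have hγi : γ i ≠ 0 := Finsupp.mem_support_iff.mp hmem
      have hbi : b i ≠ 0 := by
        intro h0
        apply hγi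
        rw [hγbj]
        simp [Finsupp.add_apply, h0, Finsupp.single_apply, hlt.ne']
      have hb'J : (monomial (b - Finsupp.single i 1 + Finsupp.single j 1) (1 : K) :
          MvPolynomial (Fin (n + 1)) K) ∈ J := hSS b (hBJ b hb) i j hlt hbi
      have hsle : Finsupp.single i 1 ≤ b := by
        rw [Finsupp.single_le_iff]; omega
      have hcan : b - Finsupp.single i 1 + Finsupp.single i 1 = b :=
        tsub_add_cancel_of_le hsle
      have hdb' : fdeg (b - Finsupp.single i 1 + Finsupp.single j 1) = r := by
        have h1 := fdeg_add (b - Finsupp.single i 1) (Finsupp.single i 1)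
        have h2 := fdeg_add (b - Finsupp.single i 1) (Finsupp.single j 1)
        rw [hcan] at h1
        rw [fdeg_single] at h1 h2
        omega
      have hb'B : (b - Finsupp.single i 1 + Finsupp.single j 1) ∈ B :=
        (hJr _ hdb').mp hb'J
      refine ⟨_, hb'B, ?_⟩
      rw [hγbj, add_right_comm, hcan]
    · exact ⟨b, hb, by rw [hγbj, heq]⟩
  -- decomposition of generators along V and the complement span
  have hdecomp : ∀ m : {m // m ∈ B}, ∃ v ∈ V, ∃ w ∈ Submodule.span K
      ((fun γ : Fin (n + 1) →₀ ℕ => (monomial γ (1 : K) :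
        MvPolynomial (Fin (n + 1)) K)) '' NB),
      v + w = (monomial m.1 (1 : K) : MvPolynomial (Fin (n + 1)) K) := by
    intro m
    have hm : (monomial m.1 (1 : K) : MvPolynomial (Fin (n + 1)) K) ∈
        V ⊔ Submodule.span K ((fun γ : Fin (n + 1) →₀ ℕ => (monomial γ (1 : K) :
          MvPolynomial (Fin (n + 1)) K)) '' NB) := by
      rw [hV3, mem_homogeneousSubmodule]
      exact isHomogeneous_monomial 1 ((fdeg_eq_degree m.1).symm.trans (hBdeg m.1 m.2))
    exact Submodule.mem_sup.mp hm
  choose v hvV w hwN hvw using hdecomp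
  choose mfun hmB hmEq using fun γ : {γ // γ ∈ T} => key γ.1 γ.2
  have hvm : ∀ m : {m // m ∈ B}, v m = (monomial m.1 (1 : K) :
      MvPolynomial (Fin (n + 1)) K) - w m := by
    intro m
    rw [← hvw m]; ring
  let g : {γ // γ ∈ T} → MvPolynomial (Fin (n + 1)) K :=
    fun γ => X (idx γ.1) * v ⟨mfun γ, hmB γ⟩
  have hgW : ∀ γ : {γ // γ ∈ T}, g γ ∈
      Submodule.restrictScalars K (Ideal.span (V : Set (MvPolynomial (Fin (n + 1)) K)))
        ⊓ homogeneousSubmodule (Fin (n + 1)) K (r + 1) := by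
    intro γ
    rw [Submodule.mem_inf]
    constructor
    · show g γ ∈ Ideal.span (V : Set (MvPolynomial (Fin (n + 1)) K))
      exact Ideal.mul_mem_left _ _ (Ideal.subset_span (hvV _))
    · rw [mem_homogeneousSubmodule]
      have hX : (X (idx γ.1) : MvPolynomial (Fin (n + 1)) K).IsHomogeneous 1 :=
        isHomogeneous_X _ _
      have hv : (v ⟨mfun γ, hmB γ⟩).IsHomogeneous r :=
        (mem_homogeneousSubmodule _ _).mp (hV1 (hvV _))
      have h2 := hX.mul hv
      exact Nat.add_comm 1 r ▸ h2
  -- diagonal coefficients are 1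
  have hcoeff1 : ∀ γ : {γ // γ ∈ T}, coeff γ.1 (g γ) = 1 := by
    intro γ
    obtain ⟨i, hi⟩ : ∃ i, idx γ.1 = i := ⟨_, rfl⟩
    have hγeq : γ.1 = Finsupp.single i 1 + mfun γ :=
      (hmEq γ).trans (by rw [hi]; exact add_comm _ _)
    show coeff γ.1 (X (idx γ.1) * v ⟨mfun γ, hmB γ⟩) = 1
    rw [hi, hγeq, hvm, mul_sub, coeff_sub, coeff_X_mul, coeff_X_mul, coeff_monomial,
      if_pos rfl]
    have hw0 : coeff (mfun γ) (w ⟨mfun γ, hmB γ⟩) = 0 := by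
      apply coeff_eq_zero_of_mem_span (hwN _)
      rw [hNB]
      rintro ⟨-, hcon⟩
      exact hcon (hmB γ)
    rw [hw0, sub_zero]
  -- off-diagonal coefficients vanish unless the minimal index drops
  have hcoeff2 : ∀ δ γ : {γ // γ ∈ T}, δ ≠ γ → coeff δ.1 (g γ) ≠ 0 →
      idx δ.1 < idx γ.1 := by
    intro δ γ hne hc
    obtain ⟨i, hi⟩ : ∃ i, idx γ.1 = i := ⟨_, rfl⟩
    have hγeq : γ.1 = mfun γ + Finsupp.single i 1 := (hmEq γ).trans (by rw [hi])
    replace hc : coeff δ.1 (X (idx γ.1) * v ⟨mfun γ, hmB γ⟩) ≠ 0 := hc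
    rw [hi, coeff_X_mul'] at hc
    split_ifs at hc with hsup
    on_goal 2 => exact absurd rfl hc
    have hδi : δ.1 i ≠ 0 := Finsupp.mem_support_iff.mp hsup
    obtain ⟨ν, hν⟩ : ∃ ν, δ.1 - Finsupp.single i 1 = ν := ⟨_, rfl⟩
    rw [hν] at hc
    have hνδ : ν + Finsupp.single i 1 = δ.1 := by
      rw [← hν]
      exact tsub_add_cancel_of_le (Finsupp.single_le_iff.mpr (by omega))
    rw [hvm, coeff_sub] at hc
    have hcases : ν = mfun γ ∨ ν ∈ NB := by
      by_contra hcon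
      push_neg at hcon
      apply hc
      rw [coeff_monomial, if_neg (fun h => hcon.1 h.symm),
        coeff_eq_zero_of_mem_span (hwN _) hcon.2, sub_zero]
    rcases hcases with hcase | hcase
    · exfalso
      apply hne
      apply Subtype.ext
      rw [← hνδ, hcase, ← hγeq]
    · obtain ⟨hνd, hνB⟩ := hcase
      obtain ⟨hmemδ, hleδ⟩ := hidx δ.1 i hδi
      rw [hi]
      rcases lt_or_eq_of_le hleδ with hlt | heq
      · exact hlt
      · exfalso
        apply hνB
        have hδeq : δ.1 = mfun δ + Finsupp.single i 1 := by
          rw [hmEq δ, heq]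
        have hνm : ν = mfun δ := by
          apply add_right_cancel (b := Finsupp.single i 1)
          rw [hνδ, hδeq]
        exact hνm ▸ hmB δ
  -- linear independence of the marked products
  have hli : LinearIndependent K g := by
    rw [linearIndependent_iff']
    intro s c hsum γ1 hγ1s
    by_contra hγ1c
    have hs' : (s.filter (fun δ => c δ ≠ 0)).Nonempty :=
      ⟨γ1, Finset.mem_filter.mpr ⟨hγ1s, hγ1c⟩⟩
    obtain ⟨γ, hγs', hmax⟩ := Finset.exists_max_image (s.filter (fun δ => c δ ≠ 0))
      (fun δ => idx δ.1) hs'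
    have hγs : γ ∈ s := (Finset.mem_filter.mp hγs').1
    have hγc : c γ ≠ 0 := (Finset.mem_filter.mp hγs').2
    have h0 : ∑ δ ∈ s, c δ * coeff γ.1 (g δ) = 0 := by
      have h1 := congrArg (coeff γ.1) hsum
      simpa [coeff_sum, coeff_smul] using h1
    rw [Finset.sum_eq_single γ] at h0
    · rw [hcoeff1 γ, mul_one] at h0
      exact hγc h0
    · intro δ hδ hneδ
      by_cases hcδ : c δ = 0
      · rw [hcδ, zero_mul]
      · have hz : coeff γ.1 (g δ) = 0 := by
          by_contra hc0
          have hlt := hcoeff2 γ δ (Ne.symm hneδ) hc0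
          exact absurd (hmax δ (Finset.mem_filter.mpr ⟨hδ, hcδ⟩)) (not_le.mpr hlt)
        rw [hz, mul_zero]
    · intro hγns
      exact absurd hγs hγns
  -- conclude by counting
  have hli' : LinearIndependent K (fun γ : {γ // γ ∈ T} =>
      (⟨g γ, hgW γ⟩ : ↥(Submodule.restrictScalars K
        (Ideal.span (V : Set (MvPolynomial (Fin (n + 1)) K)))
        ⊓ homogeneousSubmodule (Fin (n + 1)) K (r + 1)))) := by
    apply LinearIndependent.of_comp (Submodule.restrictScalars K
        (Ideal.span (V : Set (MvPolynomial (Fin (n + 1)) K)))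
        ⊓ homogeneousSubmodule (Fin (n + 1)) K (r + 1)).subtype
    exact hli
  have hcard := hli'.fintype_card_le_finrank
  rw [hrank1]
  simpa [Fintype.card_coe] using hcard

end Stmt10Aux

/-- **Theorem 2.5** (`H_J ≠ ∅ ⟺ J ∈ B_{p(t)}`): let `J` be a strongly stable ideal generated
by `s` monomials of degree `r` and `P` a natural number with `dim_K (S/J)_{r+1} ≤ P`
(dimensions of quotient components are encoded as `dim I_{r+1} + P = dim S_{r+1}`).
Then `dim_K (S/J)_{r+1} = P` iff there is a homogeneous ideal `I`, generated by its degree-`r`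
component `V`, whose degree-`r` component is a complement of `⟨N(J)_r⟩` in `S_r`
(i.e. `Δ_J(I) ≠ 0`) and with `dim_K (S/I)_{r+1} = P`. -/
theorem stmt_10 {K : Type*} [Field K] {n : ℕ} (r s P : ℕ)
    (B : Finset (Fin (n + 1) →₀ ℕ)) (hBcard : B.card = s)
    (hBdeg : ∀ α ∈ B, α.sum (fun _ e => e) = r)
    (J : Ideal (MvPolynomial (Fin (n + 1)) K))
    (hJ : J = Ideal.span ((fun a : Fin (n + 1) →₀ ℕ => (monomial a (1 : K) :
      MvPolynomial (Fin (n + 1)) K)) '' ↑B))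
    (hSS : ∀ β : Fin (n + 1) →₀ ℕ, monomial β (1 : K) ∈ J →
      ∀ i j : Fin (n + 1), i < j → β i ≠ 0 →
        monomial (β - Finsupp.single i 1 + Finsupp.single j 1) (1 : K) ∈ J)
    (hP : Module.finrank K ↥(homogeneousSubmodule (Fin (n + 1)) K (r + 1)) ≤
      Module.finrank K
        ↥(Submodule.restrictScalars K J ⊓ homogeneousSubmodule (Fin (n + 1)) K (r + 1)) + P) :
    (Module.finrank K
        ↥(Submodule.restrictScalars K J ⊓ homogeneousSubmodule (Fin (n + 1)) K (r + 1)) + P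
      = Module.finrank K ↥(homogeneousSubmodule (Fin (n + 1)) K (r + 1)))
    ↔ (∃ V : Submodule K (MvPolynomial (Fin (n + 1)) K),
        V ≤ homogeneousSubmodule (Fin (n + 1)) K r ∧
        Disjoint V (Submodule.span K ((fun γ : Fin (n + 1) →₀ ℕ => (monomial γ (1 : K) :
          MvPolynomial (Fin (n + 1)) K)) '' {γ | γ.sum (fun _ e => e) = r ∧ γ ∉ B})) ∧
        V ⊔ Submodule.span K ((fun γ : Fin (n + 1) →₀ ℕ => (monomial γ (1 : K) :
          MvPolynomial (Fin (n + 1)) K)) '' {γ | γ.sum (fun _ e => e) = r ∧ γ ∉ B})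
          = homogeneousSubmodule (Fin (n + 1)) K r ∧
        Module.finrank K
          ↥(Submodule.restrictScalars K (Ideal.span (V : Set (MvPolynomial (Fin (n + 1)) K)))
            ⊓ homogeneousSubmodule (Fin (n + 1)) K (r + 1)) + P
          = Module.finrank K ↥(homogeneousSubmodule (Fin (n + 1)) K (r + 1))) := by
  classical
  constructor
  · intro h
    refine ⟨Submodule.span K ((fun a : Fin (n + 1) →₀ ℕ => (monomial a (1 : K) :
      MvPolynomial (Fin (n + 1)) K)) '' ↑B), ?_, ?_, ?_, ?_⟩
    · rw [Submodule.span_le]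
      rintro x ⟨a, ha, rfl⟩
      rw [SetLike.mem_coe, mem_homogeneousSubmodule]
      exact isHomogeneous_monomial 1 ((Stmt10Aux.fdeg_eq_degree a).symm.trans (hBdeg a ha))
    · have hdis : Disjoint (↑B : Set (Fin (n + 1) →₀ ℕ))
          {γ : Fin (n + 1) →₀ ℕ | γ.sum (fun _ e => e) = r ∧ γ ∉ B} := by
        rw [Set.disjoint_left]
        rintro γ hγ ⟨-, hγ2⟩
        exact hγ2 hγ
      have hd := (basisMonomials (Fin (n + 1)) K).linearIndependent.disjoint_span_image hdis
      rwa [coe_basisMonomials] at hd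
    · rw [← Submodule.span_union, ← Set.image_union]
      have hset : (↑B : Set (Fin (n + 1) →₀ ℕ)) ∪
          {γ : Fin (n + 1) →₀ ℕ | γ.sum (fun _ e => e) = r ∧ γ ∉ B}
          = {γ : Fin (n + 1) →₀ ℕ | Stmt10Aux.fdeg γ = r} := by
        ext γ
        constructor
        · rintro (hγ | ⟨hγ, -⟩)
          · exact hBdeg γ hγ
          · exact hγ
        · intro hγ
          by_cases hB : γ ∈ B
          · exact Or.inl hB
          · exact Or.inr ⟨hγ, hB⟩
      rw [hset, ← Stmt10Aux.homog_eq_span]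
    · have hIJ : Ideal.span ((Submodule.span K ((fun a : Fin (n + 1) →₀ ℕ =>
          (monomial a (1 : K) : MvPolynomial (Fin (n + 1)) K)) '' ↑B) :
          Submodule K (MvPolynomial (Fin (n + 1)) K)) :
          Set (MvPolynomial (Fin (n + 1)) K)) = J := by
        rw [hJ]
        exact Submodule.span_span_of_tower (R := K) (S := MvPolynomial (Fin (n + 1)) K)
          (s := (fun a : Fin (n + 1) →₀ ℕ => (monomial a (1 : K) :
            MvPolynomial (Fin (n + 1)) K)) '' ↑B)
      rw [hIJ]
      exact h
  · rintro ⟨V, hV1, hV2, hV3, hV4⟩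
    have hle := Stmt10Aux.growth r B hBdeg J hJ hSS V hV1 hV3
    omega
end

section
/- Let J ⊆ S = K[x_0,…,x_n] be a strongly stable monomial ideal generated by s monomials of degree r, and let P be a natural number with dim_K (S/J)_{r+1} < P. Then every homogeneous ideal I ⊆ S generated by its degree-r component with dim_K (S/I)_{r+1} = P satisfies Δ_J(I) = 0; that is, I_r is not a vector-space complement of ⟨N(J)_r⟩ in S_r (either I_r ∩ ⟨N(J)_r⟩ ≠ 0 or I_r + ⟨N(J)_r⟩ ≠ S_r). -/
open MvPolynomial

set_option linter.unusedSectionVars false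
namespace Stmt11Aux

variable {K : Type*} [Field K] {σ : Type*} [Fintype σ] [DecidableEq σ]

lemma deg_eq_degree (δ : σ →₀ ℕ) : δ.sum (fun _ e => e) = Finsupp.degree δ := rfl

lemma weight_one_eq (δ : σ →₀ ℕ) : (Finsupp.weight 1) δ = δ.sum (fun _ e => e) := by
  rw [Finsupp.weight_apply]; simp [Finsupp.sum]

lemma coeff_span_monomials {N : Set (σ →₀ ℕ)} {g : MvPolynomial σ K}
    (hg : g ∈ Submodule.span K ((fun γ : σ →₀ ℕ => (monomial γ (1 : K) : MvPolynomial σ K)) '' N))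
    {γ : σ →₀ ℕ} (hγ : γ ∉ N) : coeff γ g = 0 := by
  induction hg using Submodule.span_induction with
  | mem x hx =>
    obtain ⟨δ, hδ, rfl⟩ := hx
    rw [coeff_monomial, if_neg]
    rintro rfl; exact hγ hδ
  | zero => simp
  | add x y _ _ hx hy => simp [hx, hy]
  | smul a x _ hx => simp [hx]

lemma mem_span_of_support {q : MvPolynomial σ K} {S : Set (MvPolynomial σ K)}
    (h : ∀ δ ∈ q.support, (monomial δ (1 : K)) ∈ S) : q ∈ Submodule.span K S := by
  rw [← q.support_sum_monomial_coeff]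
  refine Submodule.sum_mem _ fun δ hδ => ?_
  have : (monomial δ (coeff δ q) : MvPolynomial σ K) = coeff δ q • monomial δ 1 := by
    rw [smul_monomial, smul_eq_mul, mul_one]
  rw [this]
  exact Submodule.smul_mem _ _ (Submodule.subset_span (h δ hδ))

lemma homog_le_span (d : ℕ) : homogeneousSubmodule σ K d ≤
    Submodule.span K ((fun δ : σ →₀ ℕ => (monomial δ (1 : K) : MvPolynomial σ K)) ''
      {δ | δ.sum (fun _ e => e) = d}) := by
  intro q hq
  apply mem_span_of_support
  intro δ hδ
  refine Set.mem_image_of_mem _ ?_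
  have h1 : (Finsupp.weight 1) δ = d := (mem_homogeneousSubmodule _ _).mp hq (mem_support_iff.mp hδ)
  rw [Set.mem_setOf_eq, ← weight_one_eq]
  exact h1

instance homogFD (d : ℕ) : FiniteDimensional K (homogeneousSubmodule σ K d) := by
  have hfin : ({δ : σ →₀ ℕ | δ.sum (fun _ e => e) = d}).Finite := by
    apply Set.Finite.subset
      (Finset.finite_toSet (Finset.finsuppAntidiag (Finset.univ : Finset σ) d))
    intro δ hδ
    simp only [Set.mem_setOf_eq] at hδ
    simp only [Finset.mem_coe, Finset.mem_finsuppAntidiag]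
    refine ⟨?_, Finset.subset_univ _⟩
    rw [← hδ, Finsupp.sum]
    exact (Finset.sum_subset (Finset.subset_univ _)
      (fun x _ hx => Finsupp.notMem_support_iff.mp hx)).symm
  have : FiniteDimensional K (Submodule.span K
      ((fun δ : σ →₀ ℕ => (monomial δ (1 : K) : MvPolynomial σ K)) ''
        {δ | δ.sum (fun _ e => e) = d})) :=
    FiniteDimensional.span_of_finite K (hfin.image _)
  exact Submodule.finiteDimensional_of_le (homog_le_span d)

lemma eq_single_of_sum_eq_one {γ : σ →₀ ℕ} (hγ : γ.sum (fun _ e => e) = 1) :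
    ∃ i, γ = Finsupp.single i 1 := by
  rw [deg_eq_degree] at hγ
  have hne : γ.support.Nonempty := by
    rcases Finset.eq_empty_or_nonempty γ.support with h | h
    · rw [Finsupp.support_eq_empty.mp h] at hγ; simp [map_zero] at hγ
    · exact h
  obtain ⟨i, hi⟩ := hne
  have hzero : ∀ j, j ≠ i → γ j = 0 := by
    intro j hj
    by_contra hjne
    have hij : ({i, j} : Finset σ) ⊆ γ.support := by
      intro x hx
      simp only [Finset.mem_insert, Finset.mem_singleton] at hx
      rcases hx with rfl | rfl
      · exact hi
      · exact Finsupp.mem_support_iff.mpr hjne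
    have h2 : γ i + γ j ≤ Finsupp.degree γ := by
      rw [Finsupp.degree]
      calc γ i + γ j = ∑ x ∈ ({i, j} : Finset σ), γ x := (Finset.sum_pair (Ne.symm hj)).symm
        _ ≤ ∑ x ∈ γ.support, γ x := Finset.sum_le_sum_of_subset hij
    have hi1 : 1 ≤ γ i := Nat.one_le_iff_ne_zero.mpr (Finsupp.mem_support_iff.mp hi)
    have hj1 : 1 ≤ γ j := Nat.one_le_iff_ne_zero.mpr hjne
    omega
  refine ⟨i, ?_⟩
  have hγi : γ i = 1 := by
    have : Finsupp.degree γ = γ i := by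
      rw [Finsupp.degree]
      exact Finset.sum_eq_single (s := γ.support) (f := fun x => γ x) i (fun j hj hji => hzero j hji) (fun h => absurd hi h)
    omega
  ext j
  rw [Finsupp.single_apply]
  by_cases h : i = j
  · subst h; simpa using hγi
  · rw [if_neg h]; exact hzero j (Ne.symm h)

lemma le_of_le_deg_eq {α γ : σ →₀ ℕ} (h : α ≤ γ)
    (hd : α.sum (fun _ e => e) = γ.sum (fun _ e => e)) : α = γ := by
  have hc : α + (γ - α) = γ := by
    rw [add_comm]; exact tsub_add_cancel_of_le h
  have hadd : (α + (γ - α)).sum (fun _ e => e) = α.sum (fun _ e => e) + (γ - α).sum (fun _ e => e) :=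
    Finsupp.sum_add_index' (fun _ => rfl) (fun _ _ _ => rfl)
  rw [hc] at hadd
  have : (γ - α).sum (fun _ e => e) = 0 := by omega
  rw [deg_eq_degree, Finsupp.degree_eq_zero_iff] at this
  rw [← hc, this, add_zero]

lemma deg_add_single (β : σ →₀ ℕ) (i : σ) :
    (β + Finsupp.single i 1).sum (fun _ e => e) = β.sum (fun _ e => e) + 1 := by
  rw [Finsupp.sum_add_index' (fun _ => rfl) (fun _ _ _ => rfl), Finsupp.sum_single_index rfl]

end Stmt11Aux

open Stmt11Aux

/-- **Corollary 2.10**: let `J` be a strongly stable ideal generated by `s` monomials of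
degree `r` and `P` a natural number with `dim_K (S/J)_{r+1} < P`. Then every homogeneous
ideal `I` generated by its degree-`r` component `V` with `dim_K (S/I)_{r+1} = P` satisfies
`Δ_J(I) = 0`, i.e. `V` is not a vector-space complement of `⟨N(J)_r⟩` in `S_r`.
(Quotient dimensions are encoded as `dim I_{r+1} + P = dim S_{r+1}` etc.) -/
theorem stmt_11 {K : Type*} [Field K] {n : ℕ} (r s P : ℕ)
    (B : Finset (Fin (n + 1) →₀ ℕ)) (hBcard : B.card = s)
    (hBdeg : ∀ α ∈ B, α.sum (fun _ e => e) = r)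
    (J : Ideal (MvPolynomial (Fin (n + 1)) K))
    (hJ : J = Ideal.span ((fun a : Fin (n + 1) →₀ ℕ => (monomial a (1 : K) :
      MvPolynomial (Fin (n + 1)) K)) '' ↑B))
    (hSS : ∀ β : Fin (n + 1) →₀ ℕ, monomial β (1 : K) ∈ J →
      ∀ i j : Fin (n + 1), i < j → β i ≠ 0 →
        monomial (β - Finsupp.single i 1 + Finsupp.single j 1) (1 : K) ∈ J)
    (hP : Module.finrank K ↥(homogeneousSubmodule (Fin (n + 1)) K (r + 1)) <
      Module.finrank K
        ↥(Submodule.restrictScalars K J ⊓ homogeneousSubmodule (Fin (n + 1)) K (r + 1)) + P) :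
    ∀ V : Submodule K (MvPolynomial (Fin (n + 1)) K),
      V ≤ homogeneousSubmodule (Fin (n + 1)) K r →
      (Module.finrank K
          ↥(Submodule.restrictScalars K (Ideal.span (V : Set (MvPolynomial (Fin (n + 1)) K)))
            ⊓ homogeneousSubmodule (Fin (n + 1)) K (r + 1)) + P
        = Module.finrank K ↥(homogeneousSubmodule (Fin (n + 1)) K (r + 1))) →
      ¬ (Disjoint V (Submodule.span K ((fun γ : Fin (n + 1) →₀ ℕ => (monomial γ (1 : K) :
            MvPolynomial (Fin (n + 1)) K)) '' {γ | γ.sum (fun _ e => e) = r ∧ γ ∉ B})) ∧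
          V ⊔ Submodule.span K ((fun γ : Fin (n + 1) →₀ ℕ => (monomial γ (1 : K) :
            MvPolynomial (Fin (n + 1)) K)) '' {γ | γ.sum (fun _ e => e) = r ∧ γ ∉ B})
            = homogeneousSubmodule (Fin (n + 1)) K r) := by
  classical
  intro V hVle hVdim
  rintro ⟨-, hsup⟩
  set N : Set (Fin (n + 1) →₀ ℕ) := {γ | γ.sum (fun _ e => e) = r ∧ γ ∉ B} with hN
  -- choose representatives f β ∈ V projecting to monomial β 1
  have key : ∀ β : Fin (n + 1) →₀ ℕ, ∃ v : MvPolynomial (Fin (n + 1)) K, β ∈ B →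
      v ∈ V ∧ ∀ γ, γ ∉ N → coeff γ v = if β = γ then 1 else 0 := by
    intro β
    by_cases hβ : β ∈ B
    · have hmem : (monomial β 1 : MvPolynomial (Fin (n+1)) K) ∈ V ⊔ Submodule.span K
          ((fun γ : Fin (n + 1) →₀ ℕ => (monomial γ (1 : K) :
            MvPolynomial (Fin (n + 1)) K)) '' N) := by
        rw [hsup]
        exact (mem_homogeneousSubmodule _ _).mpr (isHomogeneous_monomial 1
          (by rw [← deg_eq_degree]; exact hBdeg β hβ))
      rw [Submodule.mem_sup] at hmem
      obtain ⟨v, hv, g, hg, hvg⟩ := hmem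
      refine ⟨v, fun _ => ⟨hv, fun γ hγ => ?_⟩⟩
      have hcv : coeff γ v = coeff γ (monomial β 1) - coeff γ g := by
        rw [← hvg, coeff_add]; ring
      rw [hcv, coeff_span_monomials hg hγ, coeff_monomial, sub_zero]
    · exact ⟨0, fun h => absurd h hβ⟩
  choose f hf using key
  -- the index set
  set T : Finset (Fin (n + 1) × (Fin (n + 1) →₀ ℕ)) :=
    (Finset.univ ×ˢ B).filter (fun p => ∀ i, p.2 i ≠ 0 → p.1 ≤ i) with hT
  have hTmem : ∀ p : Fin (n + 1) × (Fin (n + 1) →₀ ℕ),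
      p ∈ T ↔ p.2 ∈ B ∧ ∀ i, p.2 i ≠ 0 → p.1 ≤ i := by
    intro p; simp [hT]
  -- injectivity of (m, β) ↦ β + single m 1 on T
  have hmin : ∀ p ∈ T, ∀ j, ((p.2 + Finsupp.single p.1 1 : Fin (n+1) →₀ ℕ)) j ≠ 0 → p.1 ≤ j := by
    intro p hp j hj
    have hcond := ((hTmem p).mp hp).2 j
    rw [Finsupp.add_apply, Finsupp.single_apply] at hj
    by_cases h : p.1 = j
    · exact le_of_eq h
    · rw [if_neg h, add_zero] at hj; exact hcond hj
  have hinj : ∀ p ∈ T, ∀ q ∈ T, p.2 + Finsupp.single p.1 1 = q.2 + Finsupp.single q.1 1 →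
      p = q := by
    intro p hp q hq heq
    have h1 : p.1 ≤ q.1 := hmin p hp q.1 (by
      rw [heq]; simp [Finsupp.add_apply, Finsupp.single_apply])
    have h2 : q.1 ≤ p.1 := hmin q hq p.1 (by
      rw [← heq]; simp [Finsupp.add_apply, Finsupp.single_apply])
    have h3 : p.1 = q.1 := le_antisymm h1 h2
    have h4 : p.2 = q.2 := by
      apply add_right_cancel (b := Finsupp.single p.1 1)
      rw [heq, h3]
    exact Prod.ext h3 h4
  -- canonical decomposition of degree-(r+1) monomials of J
  have hcanon : ∀ δ : Fin (n + 1) →₀ ℕ, (∃ β ∈ B, β ≤ δ) → δ.sum (fun _ e => e) = r + 1 →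
      ∃ p ∈ T, δ = p.2 + Finsupp.single p.1 1 := by
    intro δ hδJ hδdeg
    obtain ⟨β, hβB, hβle⟩ := hδJ
    have hsplit : β + (δ - β) = δ := add_tsub_cancel_of_le hβle
    have hdegadd : (β + (δ - β)).sum (fun _ e => e)
        = β.sum (fun _ e => e) + (δ - β).sum (fun _ e => e) :=
      Finsupp.sum_add_index' (fun _ => rfl) (fun _ _ _ => rfl)
    have hd1 : (δ - β).sum (fun _ e => e) = 1 := by
      rw [hsplit, hδdeg, hBdeg β hβB] at hdegadd; omega
    obtain ⟨i, hi⟩ := eq_single_of_sum_eq_one hd1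
    have hδeq : δ = β + Finsupp.single i 1 := by rw [← hi]; exact hsplit.symm
    have hδi : δ i ≠ 0 := by
      rw [hδeq, Finsupp.add_apply, Finsupp.single_apply, if_pos rfl]; omega
    have hne : δ.support.Nonempty := ⟨i, Finsupp.mem_support_iff.mpr hδi⟩
    set m := δ.support.min' hne with hm
    have hmmem : m ∈ δ.support := δ.support.min'_mem hne
    have hmle : ∀ j ∈ δ.support, m ≤ j := fun j hj => δ.support.min'_le j hj
    by_cases hmi : m = i
    · refine ⟨(i, β), ?_, hδeq⟩
      rw [hTmem]
      refine ⟨hβB, fun j hj => ?_⟩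
      have hδj : δ j ≠ 0 := by
        rw [hδeq, Finsupp.add_apply]; intro h0; exact hj (show β j = 0 by omega)
      exact hmi ▸ hmle j (Finsupp.mem_support_iff.mpr hδj)
    · have hβm : β m ≠ 0 := by
        have hδm : δ m ≠ 0 := Finsupp.mem_support_iff.mp hmmem
        rw [hδeq, Finsupp.add_apply, Finsupp.single_apply,
          if_neg (fun h => hmi h.symm), add_zero] at hδm
        exact hδm
      have hmlt : m < i :=
        lt_of_le_of_ne (hmle i (Finsupp.mem_support_iff.mpr hδi)) hmi
      have hβJ : (monomial β 1 : MvPolynomial (Fin (n+1)) K) ∈ J := by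
        rw [hJ]; exact Ideal.subset_span ⟨β, hβB, rfl⟩
      have hβ'J := hSS β hβJ m i hmlt hβm
      set β' := β - Finsupp.single m 1 + Finsupp.single i 1 with hβ'
      rw [hJ, mem_ideal_span_monomial_image] at hβ'J
      obtain ⟨β'', hβ''B, hβ''le⟩ := hβ'J β' (by
        rw [support_monomial, if_neg one_ne_zero]; exact Finset.mem_singleton_self _)
      have h1le : Finsupp.single m 1 ≤ β :=
        Finsupp.single_le_iff.mpr (Nat.one_le_iff_ne_zero.mpr hβm)
      have hc : (β - Finsupp.single m 1) + Finsupp.single m 1 = β := tsub_add_cancel_of_le h1le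
      have hdegβ1 : (β - Finsupp.single m 1).sum (fun _ e => e) + 1 = r := by
        have := deg_add_single (β - Finsupp.single m 1) m
        rw [hc] at this; rw [← this, hBdeg β hβB]
      have hdegβ' : β'.sum (fun _ e => e) = r := by
        rw [hβ', deg_add_single]; omega
      have hβ'B : β' ∈ B := by
        have : β'' = β' := le_of_le_deg_eq hβ''le (by
          rw [hBdeg β'' hβ''B, hdegβ'])
        rwa [← this]
      have hδeq' : δ = β' + Finsupp.single m 1 := by
        rw [hδeq, hβ']
        calc β + Finsupp.single i 1
            = ((β - Finsupp.single m 1) + Finsupp.single m 1) + Finsupp.single i 1 := by rw [hc]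
          _ = (β - Finsupp.single m 1 + Finsupp.single i 1) + Finsupp.single m 1 :=
            add_right_comm _ _ _
      refine ⟨(m, β'), ?_, hδeq'⟩
      rw [hTmem]
      refine ⟨hβ'B, fun j hj => ?_⟩
      have hδj : δ j ≠ 0 := by
        rw [hδeq', Finsupp.add_apply]; intro h0; exact hj (show β' j = 0 by omega)
      exact hmle j (Finsupp.mem_support_iff.mpr hδj)
  -- coefficient computation
  have hcoeff : ∀ p ∈ T, ∀ q ∈ T, q.1 ≤ p.1 →
      coeff (p.2 + Finsupp.single p.1 1) (f q.2 * X q.1) = if q = p then 1 else 0 := by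
    intro p hp q hq hle
    set δ0 := p.2 + Finsupp.single p.1 1 with hδ0
    rw [coeff_mul_X']
    by_cases hmem : q.1 ∈ δ0.support
    · rw [if_pos hmem]
      have hδ0q : δ0 q.1 ≠ 0 := Finsupp.mem_support_iff.mp hmem
      set γ := δ0 - Finsupp.single q.1 1 with hγ
      have hγadd : γ + Finsupp.single q.1 1 = δ0 :=
        tsub_add_cancel_of_le (Finsupp.single_le_iff.mpr (Nat.one_le_iff_ne_zero.mpr hδ0q))
      have hγN : γ ∉ N := by
        intro hγmem
        simp only [hN, Set.mem_setOf_eq] at hγmem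
        obtain ⟨hγdeg, hγB⟩ := hγmem
        have hq1p1 : q.1 = p.1 := by
          by_contra hne
          have hp2q : p.2 q.1 ≠ 0 := by
            have h' := hδ0q
            rw [hδ0, Finsupp.add_apply, Finsupp.single_apply,
              if_neg (fun h => hne h.symm), add_zero] at h'
            exact h'
          exact hne (le_antisymm hle (((hTmem p).mp hp).2 q.1 hp2q))
        have hγp2 : γ = p.2 := by
          apply add_right_cancel (b := Finsupp.single q.1 1)
          rw [hγadd, hδ0, hq1p1]
        exact hγB (hγp2 ▸ ((hTmem p).mp hp).1)
      rw [(hf q.2 ((hTmem q).mp hq).1).2 γ hγN]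
      by_cases heq : q = p
      · subst heq
        have hq2γ : q.2 = γ := by
          apply add_right_cancel (b := Finsupp.single q.1 1)
          rw [hγadd, hδ0]
        rw [if_pos hq2γ, if_pos rfl]
      · rw [if_neg, if_neg heq]
        intro hq2γ
        apply heq
        apply hinj q hq p hp
        rw [hq2γ, hγadd, hδ0]
    · rw [if_neg hmem]
      have hqp : q ≠ p := by
        rintro rfl
        apply hmem
        rw [Finsupp.mem_support_iff, hδ0, Finsupp.add_apply, Finsupp.single_apply, if_pos rfl]
        omega
      rw [if_neg hqp]
  -- the two submodules
  set W1 := Submodule.restrictScalars K (Ideal.span (V : Set (MvPolynomial (Fin (n + 1)) K)))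
      ⊓ homogeneousSubmodule (Fin (n + 1)) K (r + 1) with hW1
  set W2 := Submodule.restrictScalars K J ⊓ homogeneousSubmodule (Fin (n + 1)) K (r + 1) with hW2
  haveI : FiniteDimensional K W1 := Submodule.finiteDimensional_of_le inf_le_right
  -- upper bound for W2
  have hbound2 : Module.finrank K W2 ≤ T.card := by
    set MS : Finset (MvPolynomial (Fin (n+1)) K) :=
      T.image (fun p => monomial (p.2 + Finsupp.single p.1 1) 1) with hMS
    have hW2le : W2 ≤ Submodule.span K (MS : Set (MvPolynomial (Fin (n+1)) K)) := by
      rintro x hx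
      rw [hW2, Submodule.mem_inf] at hx
      obtain ⟨hxJ, hxH⟩ := hx
      apply mem_span_of_support
      intro δ hδ
      have hxJ' : x ∈ Ideal.span ((fun a : Fin (n+1) →₀ ℕ => (monomial a (1:K) :
          MvPolynomial (Fin (n+1)) K)) '' ↑B) := by
        rw [← hJ]; exact hxJ
      rw [mem_ideal_span_monomial_image] at hxJ'
      obtain ⟨β, hβB, hβle⟩ := hxJ' δ hδ
      have hδdeg : δ.sum (fun _ e => e) = r + 1 := by
        have hw := (mem_homogeneousSubmodule _ _).mp hxH (mem_support_iff.mp hδ)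
        rw [← weight_one_eq]; exact hw
      obtain ⟨p, hpT, hpδ⟩ := hcanon δ ⟨β, hβB, hβle⟩ hδdeg
      rw [Finset.mem_coe, hMS, hpδ]
      exact Finset.mem_image_of_mem _ hpT
    haveI := FiniteDimensional.span_of_finite K MS.finite_toSet
    calc Module.finrank K W2
        ≤ Module.finrank K (Submodule.span K (MS : Set (MvPolynomial (Fin (n+1)) K))) :=
          Submodule.finrank_mono hW2le
      _ ≤ MS.card := finrank_span_finset_le_card MS
      _ ≤ T.card := Finset.card_image_le
  -- lower bound for W1
  have hbound1 : T.card ≤ Module.finrank K W1 := by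
    have hmemW1 : ∀ p ∈ T, f p.2 * X p.1 ∈ W1 := by
      intro p hp
      rw [hW1, Submodule.mem_inf]
      constructor
      · exact Ideal.mul_mem_right _ _ (Ideal.subset_span ((hf p.2 ((hTmem p).mp hp).1).1))
      · rw [mem_homogeneousSubmodule]
        exact ((mem_homogeneousSubmodule _ _).mp
          (hVle (hf p.2 ((hTmem p).mp hp).1).1)).mul (isHomogeneous_X _ _)
    let ww : {p // p ∈ T} → W1 := fun p => ⟨f p.1.2 * X p.1.1, hmemW1 p.1 p.2⟩
    have hLI : LinearIndependent K ww := by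
      apply LinearIndependent.of_comp (W1.subtype)
      have hcomp : (W1.subtype ∘ ww) = fun p : {p // p ∈ T} => f p.1.2 * X p.1.1 := rfl
      rw [hcomp, Fintype.linearIndependent_iff]
      intro c hc
      by_contra hne
      push_neg at hne
      obtain ⟨i₀, hi₀⟩ := hne
      set S' : Finset {p // p ∈ T} := Finset.univ.filter (fun i => c i ≠ 0) with hS'
      have hS'ne : S'.Nonempty := ⟨i₀, by simp [hS', hi₀]⟩
      obtain ⟨i1, hi1S, hi1max⟩ := S'.exists_max_image (fun i => i.1.1) hS'ne
      have hci1 : c i1 ≠ 0 := by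
        have := hi1S
        rw [hS', Finset.mem_filter] at this
        exact this.2
      set δ1 := i1.1.2 + Finsupp.single i1.1.1 1 with hδ1
      have hterm : ∀ i : {p // p ∈ T},
          c i * coeff δ1 (f i.1.2 * X i.1.1) = if i = i1 then c i else 0 := by
        intro i
        by_cases hci : c i = 0
        · rw [hci, zero_mul]
          simp [hci]
        · have hle : i.1.1 ≤ i1.1.1 := hi1max i (by
            rw [hS', Finset.mem_filter]; exact ⟨Finset.mem_univ _, hci⟩)
          rw [hδ1, hcoeff i1.1 i1.2 i.1 i.2 hle]
          by_cases h : i = i1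
          · rw [if_pos (by rw [h]), if_pos h, mul_one]
          · rw [if_neg (fun h' => h (Subtype.ext h')), if_neg h, mul_zero]
      have hzero : (0 : K) = c i1 := by
        calc (0 : K) = coeff δ1 0 := by simp
          _ = coeff δ1 (∑ i, c i • (f i.1.2 * X i.1.1)) := by rw [hc]
          _ = ∑ i : {p // p ∈ T}, c i * coeff δ1 (f i.1.2 * X i.1.1) := by
              rw [coeff_sum]
              exact Finset.sum_congr rfl (fun i _ => by rw [coeff_smul, smul_eq_mul])
          _ = ∑ i : {p // p ∈ T}, if i = i1 then c i else 0 :=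
              Finset.sum_congr rfl (fun i _ => hterm i)
          _ = c i1 := by rw [Finset.sum_ite_eq' Finset.univ i1 c, if_pos (Finset.mem_univ _)]
      exact hci1 hzero.symm
    calc T.card = Fintype.card {p // p ∈ T} := (Fintype.card_coe T).symm
      _ ≤ Module.finrank K W1 := hLI.fintype_card_le_finrank
  omega
end

section
/- Let p : ℕ → ℕ and let J ⊆ S = K[x_0,…,x_n] be a strongly stable monomial ideal generated by s monomials of degree r such that dim_K (S/J)_t = p(t) for all t ≥ r. For a homogeneous ideal I ⊆ S generated by its degree-r homogeneous component, the following are equivalent: (i) I_r is a vector-space complement of ⟨N(J)_r⟩ in S_r and dim_K (S/I)_t = p(t) for all t ≥ r; (ii) I is generated by a J-marked set G which is moreover a J-marked basis, i.e., the residue classes of the monomials of N(J) form a K-vector-space basis of S/I. -/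
open MvPolynomial

namespace Stmt12Aux

variable {n : ℕ}

variable {n : ℕ}

/-- weight of an exponent vector: sum of variable indices with multiplicity -/
def w (d : Fin (n + 1) →₀ ℕ) : ℕ := ∑ i : Fin (n + 1), (i : ℕ) * d i

lemma degree_eq_sum_univ (d : Fin (n + 1) →₀ ℕ) :
    Finsupp.degree d = ∑ i : Fin (n + 1), d i := by
  classical
  rw [Finsupp.degree]
  exact Finset.sum_subset (Finset.subset_univ _) (by
    intro x _ hx
    simpa [Finsupp.mem_support_iff] using hx)

lemma degree_sum_eq (d : Fin (n + 1) →₀ ℕ) :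
    d.sum (fun _ e => e) = Finsupp.degree d := rfl

lemma w_add (a b : Fin (n + 1) →₀ ℕ) : w (a + b) = w a + w b := by
  simp [w, mul_add, Finset.sum_add_distrib]

lemma w_mono {a b : Fin (n + 1) →₀ ℕ} (h : a ≤ b) : w a ≤ w b := by
  apply Finset.sum_le_sum
  intro i _
  exact Nat.mul_le_mul_left _ (h i)

lemma degree_add (a b : Fin (n + 1) →₀ ℕ) :
    Finsupp.degree (a + b) = Finsupp.degree a + Finsupp.degree b := by
  simp [degree_eq_sum_univ, Finset.sum_add_distrib]

lemma degree_mono {a b : Fin (n + 1) →₀ ℕ} (h : a ≤ b) :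
    Finsupp.degree a ≤ Finsupp.degree b := by
  simp only [degree_eq_sum_univ]
  exact Finset.sum_le_sum fun i _ => h i

lemma le_antisymm_of_degree {a b : Fin (n + 1) →₀ ℕ} (h : a ≤ b)
    (hd : Finsupp.degree a = Finsupp.degree b) : a = b := by
  classical
  ext i
  simp only [degree_eq_sum_univ] at hd
  exact ((Finset.sum_eq_sum_iff_of_le (fun i _ => h i)).mp hd i (Finset.mem_univ i))

/-- any exponent vector of degree ≥ r has a sub-vector of degree exactly r -/
lemma exists_sub_of_degree (r : ℕ) (β : Fin (n + 1) →₀ ℕ) (h : r ≤ Finsupp.degree β) :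
    ∃ γ ≤ β, Finsupp.degree γ = r := by
  classical
  induction r with
  | zero => exact ⟨0, zero_le, map_zero _⟩
  | succ r ih =>
    obtain ⟨γ, hle, hdeg⟩ := ih (le_trans (Nat.le_succ r) h)
    have hne : γ ≠ β := by
      intro he; rw [he] at hdeg; omega
    have : ∃ i, γ i < β i := by
      by_contra hc
      push_neg at hc
      exact hne (le_antisymm hle hc)
    obtain ⟨i, hi⟩ := this
    refine ⟨γ + Finsupp.single i 1, ?_, ?_⟩
    · intro j
      rcases eq_or_ne j i with rfl | hj
      · simpa [Finsupp.single_apply] using hi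
      · simpa [Finsupp.single_apply, hj.symm] using hle j
    · rw [degree_add, hdeg]
      simp [degree_eq_sum_univ, Finsupp.single_apply]



section Comb

/-- if `α ≠ γ` have the same degree and there is no pair `i < j` with
`α` exceeding `γ` at `i` and deficient at `j`, then `w γ < w α`. -/
lemma w_lt_of_no_pair {α γ : Fin (n + 1) →₀ ℕ}
    (hdα : Finsupp.degree α = Finsupp.degree γ) (hne : α ≠ γ)
    (hnp : ∀ i j : Fin (n + 1), i < j → γ i < α i → ¬ α j < γ j) :
    w γ < w α := by
  classical
  set D : Finset (Fin (n + 1)) := Finset.univ.filter (fun j => α j < γ j) with hD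
  have hDne : D.Nonempty := by
    by_contra hc
    rw [Finset.not_nonempty_iff_eq_empty] at hc
    have hle : γ ≤ α := by
      intro j
      by_contra hj
      have : j ∈ D := by simp [hD]; omega
      simp [hc] at this
    exact hne (le_antisymm_of_degree hle (by rw [hdα])).symm
  obtain ⟨b, hbD, hb⟩ := Finset.exists_max_image D (fun j => (j : ℕ)) hDne
  have hbdef : α b < γ b := by simpa [hD] using hbD
  set c : ℤ := (b : ℕ) + 1 with hc
  have key : ∀ i : Fin (n + 1), (0 : ℤ) ≤ ((i : ℕ) - c) * ((α i : ℤ) - γ i) := by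
    intro i
    rcases lt_trichotomy (α i) (γ i) with hlt | heq | hgt
    · have hiD : i ∈ D := by simp [hD, hlt]
      have : (i : ℕ) ≤ (b : ℕ) := hb i hiD
      have h1 : ((i : ℕ) : ℤ) - c ≤ -1 := by omega
      have h2 : (α i : ℤ) - γ i ≤ -1 := by omega
      nlinarith
    · simp [heq]
    · -- excess at i : then b < i
      have hbi : ¬ i < b := fun hib => hnp i b hib hgt hbdef
      have hne' : i ≠ b := by rintro rfl; omega
      have : (b : ℕ) < (i : ℕ) := by
        rcases lt_or_ge (b : Fin (n+1)) i with h | h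
        · exact h
        · exact absurd (lt_of_le_of_ne h (by simpa using hne')) hbi
      have h1 : (0 : ℤ) ≤ ((i : ℕ) : ℤ) - c := by omega
      have h2 : (0 : ℤ) ≤ (α i : ℤ) - γ i := by omega
      positivity
  have hbterm : (1 : ℤ) ≤ (((b : ℕ) : ℤ) - c) * ((α b : ℤ) - γ b) := by
    have h1 : (((b : ℕ) : ℤ) - c) = -1 := by omega
    have h2 : (α b : ℤ) - γ b ≤ -1 := by omega
    rw [h1]; nlinarith
  have hsum : (1 : ℤ) ≤ ∑ i : Fin (n + 1), (((i : ℕ) : ℤ) - c) * ((α i : ℤ) - γ i) :=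
    le_trans hbterm (Finset.single_le_sum (fun i _ => key i) (Finset.mem_univ b))
  have hexp : ∑ i : Fin (n + 1), (((i : ℕ) : ℤ) - c) * ((α i : ℤ) - γ i)
      = ((w α : ℤ) - w γ) - c * (((Finsupp.degree α : ℕ) : ℤ) - ((Finsupp.degree γ : ℕ) : ℤ)) := by
    simp only [w, degree_eq_sum_univ]
    push_cast
    rw [mul_sub, Finset.mul_sum, Finset.mul_sum, ← Finset.sum_sub_distrib,
      ← Finset.sum_sub_distrib, ← Finset.sum_sub_distrib]
    exact Finset.sum_congr rfl fun i _ => by ring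
  rw [hexp, hdα] at hsum
  simp at hsum
  omega

end Comb


section IdealComb

variable {K : Type*} [Field K]

lemma memJ {B : Finset (Fin (n + 1) →₀ ℕ)} {J : Ideal (MvPolynomial (Fin (n + 1)) K)}
    (hJ : J = Ideal.span ((fun a : Fin (n + 1) →₀ ℕ => (monomial a (1 : K) :
      MvPolynomial (Fin (n + 1)) K)) '' ↑B)) (γ : Fin (n + 1) →₀ ℕ) :
    monomial γ (1 : K) ∈ J ↔ ∃ α ∈ B, α ≤ γ := by
  rw [hJ, mem_ideal_span_monomial_image]
  simp [support_monomial]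

/-- the candidate set: sub-exponents of `β` of degree `r` -/
noncomputable def cand (r : ℕ) (β : Fin (n + 1) →₀ ℕ) : Finset (Fin (n + 1) →₀ ℕ) :=
  (Finset.Iic β).filter fun γ => Finsupp.degree γ = r

noncomputable def WMax (r : ℕ) (β : Fin (n + 1) →₀ ℕ) : ℕ := (cand r β).sup w

lemma mem_cand {r : ℕ} {β γ : Fin (n + 1) →₀ ℕ} :
    γ ∈ cand r β ↔ γ ≤ β ∧ Finsupp.degree γ = r := by
  simp [cand, Finset.mem_filter, Finset.mem_Iic]

lemma le_WMax {r : ℕ} {β γ : Fin (n + 1) →₀ ℕ} (h1 : γ ≤ β) (h2 : Finsupp.degree γ = r) :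
    w γ ≤ WMax r β :=
  Finset.le_sup (mem_cand.mpr ⟨h1, h2⟩)

lemma WMax_le {r : ℕ} {β : Fin (n + 1) →₀ ℕ} : WMax r β ≤ w β :=
  Finset.sup_le fun γ hγ => w_mono (mem_cand.mp hγ).1

lemma exists_maximizer {r : ℕ} {β : Fin (n + 1) →₀ ℕ} (h : r ≤ Finsupp.degree β) :
    ∃ γ, γ ≤ β ∧ Finsupp.degree γ = r ∧ w γ = WMax r β := by
  obtain ⟨γ0, h1, h2⟩ := exists_sub_of_degree r β h
  obtain ⟨γ, hγ, he⟩ := Finset.exists_mem_eq_sup (cand r β) ⟨γ0, mem_cand.mpr ⟨h1, h2⟩⟩ w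
  rw [mem_cand] at hγ
  exact ⟨γ, hγ.1, hγ.2, he.symm⟩

variable {B : Finset (Fin (n + 1) →₀ ℕ)} {J : Ideal (MvPolynomial (Fin (n + 1)) K)} {r : ℕ}

lemma borel_climb
    (hJ : J = Ideal.span ((fun a : Fin (n + 1) →₀ ℕ => (monomial a (1 : K) :
      MvPolynomial (Fin (n + 1)) K)) '' ↑B))
    (hBdeg : ∀ α ∈ B, α.sum (fun _ e => e) = r)
    (hSS : ∀ β : Fin (n + 1) →₀ ℕ, monomial β (1 : K) ∈ J →
      ∀ i j : Fin (n + 1), i < j → β i ≠ 0 →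
        monomial (β - Finsupp.single i 1 + Finsupp.single j 1) (1 : K) ∈ J)
    {β γ : Fin (n + 1) →₀ ℕ}
    (hβJ : monomial β (1 : K) ∈ J) (hγβ : γ ≤ β) (hγd : Finsupp.degree γ = r)
    (hmax : ∀ γ', γ' ≤ β → Finsupp.degree γ' = r → w γ' ≤ w γ) :
    monomial γ (1 : K) ∈ J := by
  classical
  obtain ⟨α₀, hα₀B, hα₀β⟩ := (memJ hJ β).mp hβJ
  have hα₀d : Finsupp.degree α₀ = r := by rw [← degree_sum_eq]; exact hBdeg _ hα₀B
  have hα₀J : monomial α₀ (1 : K) ∈ J := (memJ hJ α₀).mpr ⟨α₀, hα₀B, le_refl _⟩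
  have main : ∀ m : ℕ, ∀ α : Fin (n + 1) →₀ ℕ,
      (∑ i : Fin (n + 1), Nat.dist (α i) (γ i)) ≤ m → monomial α (1 : K) ∈ J →
      α ≤ β → Finsupp.degree α = r → monomial γ (1 : K) ∈ J := by
    intro m
    induction m with
    | zero =>
      intro α hdist hαJ hαβ hαd
      have : α = γ := by
        ext k
        have h0 : Nat.dist (α k) (γ k) = 0 :=
          Nat.le_zero.mp (le_trans (Finset.single_le_sum
            (f := fun i => Nat.dist (α i) (γ i))
            (fun i _ => Nat.zero_le _) (Finset.mem_univ k)) hdist)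
        exact Nat.eq_of_dist_eq_zero h0
      rwa [this] at hαJ
    | succ m ih =>
      intro α hdist hαJ hαβ hαd
      by_cases heq : α = γ
      · rwa [heq] at hαJ
      have hpair : ∃ i j : Fin (n + 1), i < j ∧ γ i < α i ∧ α j < γ j := by
        by_contra hc
        push_neg at hc
        have hlt := w_lt_of_no_pair (hαd.trans hγd.symm) heq
          (fun i j hij hexc hdef => absurd hdef (Nat.not_lt.mpr (hc i j hij hexc)))
        have := hmax α hαβ hαd
        omega
      obtain ⟨i, j, hij, hexc, hdef⟩ := hpair
      set α' := α - Finsupp.single i 1 + Finsupp.single j 1 with hα'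
      have hαi : α i ≠ 0 := by omega
      have hα'J : monomial α' (1 : K) ∈ J := hSS α hαJ i j hij hαi
      have hij' : (i : Fin (n+1)) ≠ j := ne_of_lt hij
      have happ : ∀ k, α' k = α k - (if i = k then 1 else 0) + (if j = k then 1 else 0) := by
        intro k
        simp [hα', Finsupp.add_apply, Finsupp.tsub_apply, Finsupp.single_apply]
      have hα'β : α' ≤ β := by
        intro k
        rw [happ k]
        rcases eq_or_ne i k with rfl | hik
        · rw [if_pos rfl, if_neg (fun h : j = i => hij' h.symm)]
          have := hαβ i; omega
        · rcases eq_or_ne j k with rfl | hjk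
          · rw [if_neg (fun h : i = j => hij' h), if_pos rfl]
            have := hγβ j; omega
          · rw [if_neg hik, if_neg hjk]
            have := hαβ k; omega
      have hα'd : Finsupp.degree α' = r := by
        have hs : Finsupp.single i 1 ≤ α := by
          intro k
          rcases eq_or_ne i k with rfl | hik
          · simpa [Finsupp.single_apply] using Nat.one_le_iff_ne_zero.mpr hαi
          · simp [Finsupp.single_apply, hik]
        have hcancel : (α - Finsupp.single i 1) + Finsupp.single i 1 = α :=
          tsub_add_cancel_of_le hs
        have h1 : Finsupp.degree (α - Finsupp.single i 1) + 1 = r := by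
          have := degree_add (α - Finsupp.single i 1) (Finsupp.single i 1)
          rw [hcancel] at this
          simp only [degree_eq_sum_univ] at this ⊢
          rw [← hαd, degree_eq_sum_univ]
          rw [this]
          congr 1
          simp [Finsupp.single_apply]
        rw [hα', degree_add]
        have h2 : Finsupp.degree (Finsupp.single j (1:ℕ)) = 1 := by
          simp [degree_eq_sum_univ, Finsupp.single_apply]
        omega
      have hdist' : (∑ k : Fin (n + 1), Nat.dist (α' k) (γ k)) ≤ m := by
        have hlt : (∑ k : Fin (n + 1), Nat.dist (α' k) (γ k))
            < ∑ k : Fin (n + 1), Nat.dist (α k) (γ k) := by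
          apply Finset.sum_lt_sum
          · intro k _
            rw [happ k]
            rcases eq_or_ne i k with rfl | hik
            · rw [if_pos rfl, if_neg (fun h : j = i => hij' h.symm)]
              simp only [Nat.dist]
              omega
            · rcases eq_or_ne j k with rfl | hjk
              · rw [if_neg (fun h : i = j => hij' h), if_pos rfl]
                simp only [Nat.dist]
                omega
              · rw [if_neg hik, if_neg hjk]
                simp
          · refine ⟨i, Finset.mem_univ i, ?_⟩
            rw [happ i, if_pos rfl, if_neg (fun h : j = i => hij' h.symm)]
            simp only [Nat.dist]
            omega
        omega
      exact ih α' hdist' hα'J hα'β hα'd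
  exact main _ α₀ (le_refl _) hα₀J hα₀β hα₀d

lemma maximizer_memJ
    (hJ : J = Ideal.span ((fun a : Fin (n + 1) →₀ ℕ => (monomial a (1 : K) :
      MvPolynomial (Fin (n + 1)) K)) '' ↑B))
    (hBdeg : ∀ α ∈ B, α.sum (fun _ e => e) = r)
    (hSS : ∀ β : Fin (n + 1) →₀ ℕ, monomial β (1 : K) ∈ J →
      ∀ i j : Fin (n + 1), i < j → β i ≠ 0 →
        monomial (β - Finsupp.single i 1 + Finsupp.single j 1) (1 : K) ∈ J)
    {β γ : Fin (n + 1) →₀ ℕ}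
    (hβJ : monomial β (1 : K) ∈ J) (hγβ : γ ≤ β) (hγd : Finsupp.degree γ = r)
    (hγmax : w γ = WMax r β) :
    monomial γ (1 : K) ∈ J :=
  borel_climb hJ hBdeg hSS hβJ hγβ hγd
    (fun γ' h1 h2 => hγmax ▸ le_WMax h1 h2)

end IdealComb


section Spans

variable {K : Type*} [Field K]

/-- span of the monomials with exponents in `A` -/
noncomputable def spanMon (A : Set (Fin (n + 1) →₀ ℕ)) :
    Submodule K (MvPolynomial (Fin (n + 1)) K) :=
  Submodule.span K ((fun d : Fin (n + 1) →₀ ℕ => (monomial d (1 : K) :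
    MvPolynomial (Fin (n + 1)) K)) '' A)

lemma mem_spanMon_iff {A : Set (Fin (n + 1) →₀ ℕ)} {p : MvPolynomial (Fin (n + 1)) K} :
    p ∈ spanMon A ↔ ↑p.support ⊆ A := by
  constructor
  · intro hp
    induction hp using Submodule.span_induction with
    | mem g hg =>
      obtain ⟨d, hd, rfl⟩ := hg
      intro x hx
      classical
      rw [Finset.mem_coe, support_monomial, if_neg one_ne_zero, Finset.mem_singleton] at hx
      exact hx ▸ hd
    | zero => simp
    | add x y _ _ ihx ihy =>
      intro d hd
      rw [Finset.mem_coe] at hd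
      rcases Finset.mem_union.mp (MvPolynomial.support_add hd) with h | h
      · exact ihx h
      · exact ihy h
    | smul c x _ ihx =>
      intro d hd
      rw [Finset.mem_coe] at hd
      exact ihx (MvPolynomial.support_smul hd)
  · intro hsupp
    rw [show p = ∑ d ∈ p.support, monomial d (coeff d p) from
      (support_sum_monomial_coeff p).symm]
    apply Submodule.sum_mem
    intro d hd
    have : (monomial d (coeff d p) : MvPolynomial (Fin (n + 1)) K)
        = coeff d p • monomial d 1 := by
      rw [smul_monomial, smul_eq_mul, mul_one]
    rw [this]
    exact Submodule.smul_mem _ _ (Submodule.subset_span ⟨d, hsupp hd, rfl⟩)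

lemma homog_eq_spanMon (t : ℕ) :
    homogeneousSubmodule (Fin (n + 1)) K t = spanMon {d | Finsupp.degree d = t} := by
  ext p
  rw [mem_homogeneousSubmodule, mem_spanMon_iff]
  constructor
  · intro h d hd
    have := h (MvPolynomial.mem_support_iff.mp (Finset.mem_coe.mp hd))
    rwa [Finsupp.degree_eq_weight_one]
  · intro h d hd
    rw [show (Finsupp.weight 1 : (Fin (n + 1) →₀ ℕ) →+ ℕ) = Finsupp.degree from
      Finsupp.degree_eq_weight_one.symm]
    exact h (Finset.mem_coe.mpr (MvPolynomial.mem_support_iff.mpr hd))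

lemma support_degree_of_homog {t : ℕ} {f : MvPolynomial (Fin (n + 1)) K}
    (hf : f ∈ homogeneousSubmodule (Fin (n + 1)) K t) {d : Fin (n + 1) →₀ ℕ}
    (hd : d ∈ f.support) : Finsupp.degree d = t := by
  rw [homog_eq_spanMon, mem_spanMon_iff] at hf
  exact hf (Finset.mem_coe.mpr hd)

lemma spanMon_le_homog {t : ℕ} {A : Set (Fin (n + 1) →₀ ℕ)}
    (hA : ∀ d ∈ A, Finsupp.degree d = t) :
    spanMon (K := K) A ≤ homogeneousSubmodule (Fin (n + 1)) K t := by
  intro p hp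
  rw [mem_spanMon_iff] at hp
  rw [homog_eq_spanMon, mem_spanMon_iff]
  exact fun d hd => hA d (hp hd)

lemma spanMon_disjoint {A A' : Set (Fin (n + 1) →₀ ℕ)} (h : A ∩ A' = ∅) :
    Disjoint (spanMon (K := K) A) (spanMon (K := K) A') := by
  rw [disjoint_iff]
  rw [eq_bot_iff]
  intro p hp
  obtain ⟨h1, h2⟩ := Submodule.mem_inf.mp hp
  rw [mem_spanMon_iff] at h1 h2
  have : p.support = ∅ := by
    have hsub := Set.subset_inter h1 h2
    rw [h] at hsub
    exact_mod_cast Set.subset_empty_iff.mp hsub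
  simp only [Submodule.mem_bot]
  exact MvPolynomial.support_eq_empty.mp this

lemma spanMon_union (A A' : Set (Fin (n + 1) →₀ ℕ)) :
    spanMon (K := K) (A ∪ A') = spanMon A ⊔ spanMon A' := by
  rw [spanMon, Set.image_union, Submodule.span_union]
  rfl

lemma finite_degree_set (t : ℕ) : {d : Fin (n + 1) →₀ ℕ | Finsupp.degree d = t}.Finite :=
  (Finsupp.finite_of_degree_le t).subset fun d hd => le_of_eq hd

lemma fd_spanMon {A : Set (Fin (n + 1) →₀ ℕ)} (hA : A.Finite) :
    FiniteDimensional K (spanMon (K := K) A) :=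
  FiniteDimensional.span_of_finite K (hA.image _)

instance fd_homog (t : ℕ) : FiniteDimensional K (homogeneousSubmodule (Fin (n + 1)) K t) := by
  rw [homog_eq_spanMon]
  exact fd_spanMon (finite_degree_set t)

end Spans


section Components

variable {K : Type*} [Field K]

lemma comp_mul_homog (a f : MvPolynomial (Fin (n + 1)) K) (m : ℕ)
    (hf : f ∈ homogeneousSubmodule (Fin (n + 1)) K m) (t : ℕ) :
    homogeneousComponent t (a * f)
      = if m ≤ t then homogeneousComponent (t - m) a * f else 0 := by
  classical
  have expand : a * f = ∑ i ∈ Finset.range (a.totalDegree + 1),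
      homogeneousComponent i a * f := by
    rw [← Finset.sum_mul, sum_homogeneousComponent]
  rw [expand, map_sum]
  have each : ∀ i : ℕ, homogeneousComponent t (homogeneousComponent i a * f)
      = if t = i + m then homogeneousComponent i a * f else 0 := by
    intro i
    exact homogeneousComponent_of_mem ((mem_homogeneousSubmodule _ _).mpr
      ((homogeneousComponent_isHomogeneous i a).mul ((mem_homogeneousSubmodule _ _).mp hf)))
  rw [Finset.sum_congr rfl (fun i _ => each i)]
  by_cases hmt : m ≤ t
  · rw [if_pos hmt]
    have hiff : ∀ i : ℕ, (t = i + m) ↔ (i = t - m) := by intro i; omega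
    simp_rw [hiff]
    rw [Finset.sum_ite_eq' (Finset.range (a.totalDegree + 1)) (t - m)
      (fun i => homogeneousComponent i a * f)]
    by_cases hin : t - m ∈ Finset.range (a.totalDegree + 1)
    · rw [if_pos hin]
    · rw [if_neg hin]
      have : homogeneousComponent (t - m) a = 0 :=
        homogeneousComponent_eq_zero _ a (by simp only [Finset.mem_range] at hin; omega)
      rw [this, zero_mul]
  · rw [if_neg hmt]
    apply Finset.sum_eq_zero
    intro i _
    rw [if_neg (by omega)]

lemma ideal_comp {r : ℕ} (F : Set (MvPolynomial (Fin (n + 1)) K))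
    (hFh : ∀ g ∈ F, g ∈ homogeneousSubmodule (Fin (n + 1)) K r)
    {f : MvPolynomial (Fin (n + 1)) K} (hf : f ∈ Ideal.span F) :
    ∀ t : ℕ, homogeneousComponent t f ∈ Ideal.span F
      ∧ (t < r → homogeneousComponent t f = 0) := by
  classical
  induction hf using Submodule.span_induction with
  | mem g hg =>
    intro t
    rw [homogeneousComponent_of_mem ((mem_homogeneousSubmodule _ _).mp (hFh g hg))]
    by_cases htr : t = r
    · rw [if_pos htr]
      exact ⟨Ideal.subset_span hg, fun hlt => absurd htr (by omega)⟩
    · rw [if_neg htr]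
      exact ⟨Ideal.zero_mem _, fun _ => rfl⟩
  | zero => simp
  | add x y _ _ ihx ihy =>
    intro t
    rw [map_add]
    exact ⟨Ideal.add_mem _ (ihx t).1 (ihy t).1,
      fun hlt => by rw [(ihx t).2 hlt, (ihy t).2 hlt, add_zero]⟩
  | smul a x hx ih =>
    intro t
    have hax : a • x = a * x := by rw [smul_eq_mul]
    have expand : a * x = ∑ k ∈ Finset.range (x.totalDegree + 1),
        a * homogeneousComponent k x := by
      rw [← Finset.mul_sum, sum_homogeneousComponent]
    rw [hax, expand, map_sum]
    have each : ∀ k : ℕ, homogeneousComponent t (a * homogeneousComponent k x)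
        = if k ≤ t then homogeneousComponent (t - k) a * homogeneousComponent k x else 0 :=
      fun k => comp_mul_homog a _ k (homogeneousComponent_mem k x) t
    constructor
    · apply Ideal.sum_mem
      intro k _
      rw [each k]
      split
      · exact Ideal.mul_mem_left _ _ ((ih k).1)
      · exact Ideal.zero_mem _
    · intro hlt
      apply Finset.sum_eq_zero
      intro k _
      rw [each k]
      split
      · rw [(ih k).2 (by omega), mul_zero]
      · rfl

/-- every element of `f ∈ homogeneousSubmodule t` has `homogeneousComponent t f = f` -/
lemma comp_self {t : ℕ} {f : MvPolynomial (Fin (n + 1)) K}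
    (hf : f ∈ homogeneousSubmodule (Fin (n + 1)) K t) :
    homogeneousComponent t f = f := by
  rw [homogeneousComponent_of_mem ((mem_homogeneousSubmodule _ _).mp hf), if_pos rfl]

lemma support_comp_subset (t : ℕ) (f : MvPolynomial (Fin (n + 1)) K) :
    (homogeneousComponent t f).support ⊆ f.support := by
  intro d hd
  rw [MvPolynomial.mem_support_iff, coeff_homogeneousComponent] at hd
  rw [MvPolynomial.mem_support_iff]
  intro h
  rw [h] at hd
  simp at hd

lemma comp_mem_spanMon {A : Set (Fin (n + 1) →₀ ℕ)} {f : MvPolynomial (Fin (n + 1)) K}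
    (hf : ↑f.support ⊆ A) (t : ℕ) :
    homogeneousComponent t f ∈ spanMon (K := K) {d ∈ A | Finsupp.degree d = t} := by
  rw [mem_spanMon_iff]
  intro d hd
  rw [Finset.mem_coe, MvPolynomial.mem_support_iff, coeff_homogeneousComponent] at hd
  by_cases hdt : Finsupp.degree d = t
  · refine ⟨hf ?_, hdt⟩
    rw [Finset.mem_coe, MvPolynomial.mem_support_iff]
    intro h
    rw [if_pos hdt, h] at hd
    exact hd rfl
  · rw [if_neg hdt] at hd
    exact absurd rfl hd

end Components


section Reduce

variable {K : Type*} [Field K]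
variable {B : Finset (Fin (n + 1) →₀ ℕ)} {J : Ideal (MvPolynomial (Fin (n + 1)) K)} {r : ℕ}

lemma not_memJ_of_degree_lt
    (hJ : J = Ideal.span ((fun a : Fin (n + 1) →₀ ℕ => (monomial a (1 : K) :
      MvPolynomial (Fin (n + 1)) K)) '' ↑B))
    (hBdeg : ∀ α ∈ B, α.sum (fun _ e => e) = r)
    {β : Fin (n + 1) →₀ ℕ} (hβ : Finsupp.degree β < r) :
    monomial β (1 : K) ∉ J := by
  intro h
  obtain ⟨α, hαB, hαle⟩ := (memJ hJ β).mp h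
  have h1 : Finsupp.degree α = r := by rw [← degree_sum_eq]; exact hBdeg _ hαB
  have := degree_mono hαle
  omega

lemma memJ_degree_r_iff
    (hJ : J = Ideal.span ((fun a : Fin (n + 1) →₀ ℕ => (monomial a (1 : K) :
      MvPolynomial (Fin (n + 1)) K)) '' ↑B))
    (hBdeg : ∀ α ∈ B, α.sum (fun _ e => e) = r)
    {β : Fin (n + 1) →₀ ℕ} (hβ : Finsupp.degree β = r) :
    monomial β (1 : K) ∈ J ↔ β ∈ B := by
  rw [memJ hJ]
  constructor
  · rintro ⟨α, hαB, hαle⟩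
    have h1 : Finsupp.degree α = r := by rw [← degree_sum_eq]; exact hBdeg _ hαB
    have : α = β := le_antisymm_of_degree hαle (by rw [h1, hβ])
    rwa [← this]
  · intro h
    exact ⟨β, h, le_refl _⟩

/-- the `J`-degree-`t` part of the polynomial ring, as a span of monomials -/
lemma J_inf_homog_eq
    (hJ : J = Ideal.span ((fun a : Fin (n + 1) →₀ ℕ => (monomial a (1 : K) :
      MvPolynomial (Fin (n + 1)) K)) '' ↑B)) (t : ℕ) :
    Submodule.restrictScalars K J ⊓ homogeneousSubmodule (Fin (n + 1)) K t
      = spanMon {d | Finsupp.degree d = t ∧ monomial d (1 : K) ∈ J} := by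
  apply le_antisymm
  · rintro f ⟨hfJ, hfh⟩
    rw [mem_spanMon_iff]
    intro d hd
    rw [Finset.mem_coe] at hd
    constructor
    · exact support_degree_of_homog hfh hd
    · rw [memJ hJ]
      have hfJ' : f ∈ J := hfJ
      rw [hJ, mem_ideal_span_monomial_image] at hfJ'
      exact hfJ' d hd
  · apply Submodule.span_le.mpr
    rintro f ⟨d, ⟨hd1, hd2⟩, rfl⟩
    refine Submodule.mem_inf.mpr ⟨hd2, ?_⟩
    rw [mem_homogeneousSubmodule]
    exact isHomogeneous_monomial _ hd1

/-- The key reduction lemma: modulo `I`, every monomial of degree `≥ r` is congruent to a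
linear combination of monomials outside `J` of the same degree. -/
lemma reduce
    (hJ : J = Ideal.span ((fun a : Fin (n + 1) →₀ ℕ => (monomial a (1 : K) :
      MvPolynomial (Fin (n + 1)) K)) '' ↑B))
    (hBdeg : ∀ α ∈ B, α.sum (fun _ e => e) = r)
    (hSS : ∀ β : Fin (n + 1) →₀ ℕ, monomial β (1 : K) ∈ J →
      ∀ i j : Fin (n + 1), i < j → β i ≠ 0 →
        monomial (β - Finsupp.single i 1 + Finsupp.single j 1) (1 : K) ∈ J)
    (I : Ideal (MvPolynomial (Fin (n + 1)) K))
    (T : (Fin (n + 1) →₀ ℕ) → MvPolynomial (Fin (n + 1)) K)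
    (hT : ∀ α ∈ B, (monomial α (1 : K) - T α ∈ I)
      ∧ T α ∈ homogeneousSubmodule (Fin (n + 1)) K r
      ∧ ∀ γ ∈ (T α).support, monomial γ (1 : K) ∉ J) :
    ∀ β : Fin (n + 1) →₀ ℕ, r ≤ Finsupp.degree β →
      monomial β (1 : K) ∈ Submodule.restrictScalars K I
        ⊔ spanMon {d | Finsupp.degree d = Finsupp.degree β ∧ monomial d (1 : K) ∉ J} := by
  classical
  suffices H : ∀ m : ℕ, ∀ β : Fin (n + 1) →₀ ℕ, r ≤ Finsupp.degree β →
      w β - WMax r β < m →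
      monomial β (1 : K) ∈ Submodule.restrictScalars K I
        ⊔ spanMon {d | Finsupp.degree d = Finsupp.degree β ∧ monomial d (1 : K) ∉ J} by
    exact fun β hβ => H (w β - WMax r β + 1) β hβ (Nat.lt_succ_self _)
  intro m
  induction m with
  | zero => intro β _ h; omega
  | succ m ih =>
    intro β hβ hm
    by_cases hβJ : monomial β (1 : K) ∈ J
    · obtain ⟨α, hαβ, hαd, hαW⟩ := exists_maximizer (r := r) hβ
      have hαJ := maximizer_memJ hJ hBdeg hSS hβJ hαβ hαd hαW
      have hαB : α ∈ B := (memJ_degree_r_iff hJ hBdeg hαd).mp hαJ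
      set δ := β - α with hδdef
      have hδα : δ + α = β := tsub_add_cancel_of_le hαβ
      have hdegδ : Finsupp.degree δ + r = Finsupp.degree β := by
        rw [← hδα, degree_add, hαd]
      obtain ⟨hfI, hTh, hTN⟩ := hT α hαB
      have hmon : monomial δ (1 : K) * monomial α 1 = monomial β 1 := by
        rw [monomial_mul, one_mul, hδα]
      have hsplit : monomial β (1 : K)
          = monomial δ 1 * (monomial α 1 - T α) + monomial δ 1 * T α := by
        rw [mul_sub, ← hmon]; ring
      rw [hsplit]
      apply Submodule.add_mem
      · exact Submodule.mem_sup_left (Ideal.mul_mem_left I _ hfI)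
      · rw [show T α = ∑ γ ∈ (T α).support, monomial γ (coeff γ (T α)) from
          (support_sum_monomial_coeff (T α)).symm, Finset.mul_sum]
        apply Submodule.sum_mem
        intro γ hγ
        have hterm : monomial δ (1 : K) * monomial γ (coeff γ (T α))
            = coeff γ (T α) • monomial (δ + γ) 1 := by
          rw [monomial_mul, one_mul, smul_monomial, smul_eq_mul, mul_one]
        rw [hterm]
        apply Submodule.smul_mem
        have hγd : Finsupp.degree γ = r := support_degree_of_homog hTh hγ
        have hdγ : Finsupp.degree (δ + γ) = Finsupp.degree β := by
          rw [degree_add, hγd, hdegδ]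
        by_cases hγJ' : monomial (δ + γ) (1 : K) ∈ J
        · have hγle : γ ≤ δ + γ := le_add_self
          have hwlt : w γ + 1 ≤ WMax r (δ + γ) := by
            have h1 : w γ ≤ WMax r (δ + γ) := le_WMax hγle hγd
            rcases eq_or_lt_of_le h1 with heq | hlt
            · exfalso
              exact hTN γ hγ (maximizer_memJ hJ hBdeg hSS hγJ' hγle hγd heq)
            · omega
          have hWle : WMax r (δ + γ) ≤ w (δ + γ) := WMax_le
          have hwβ : w β = w δ + w α := by rw [← hδα, w_add]
          have hwδγ : w (δ + γ) = w δ + w γ := w_add δ γ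
          have hmeas : w (δ + γ) - WMax r (δ + γ) < m := by
            rw [← hαW] at hm
            omega
          have hrec := ih (δ + γ) (by omega) hmeas
          rwa [hdγ] at hrec
        · apply Submodule.mem_sup_right
          exact Submodule.subset_span ⟨δ + γ, ⟨hdγ, hγJ'⟩, rfl⟩
    · apply Submodule.mem_sup_right
      exact Submodule.subset_span ⟨β, ⟨rfl, hβJ⟩, rfl⟩

end Reduce


section MainAux

variable {K : Type*} [Field K]
variable {B : Finset (Fin (n + 1) →₀ ℕ)} {J : Ideal (MvPolynomial (Fin (n + 1)) K)} {r : ℕ}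

/-- exponents of monomials of degree `t` outside `J` -/
def NtSet (J : Ideal (MvPolynomial (Fin (n + 1)) K)) (t : ℕ) : Set (Fin (n + 1) →₀ ℕ) :=
  {d | Finsupp.degree d = t ∧ monomial d (1 : K) ∉ J}

lemma spanMon_def (A : Set (Fin (n + 1) →₀ ℕ)) :
    spanMon (K := K) A = Submodule.span K ((fun d : Fin (n + 1) →₀ ℕ =>
      (monomial d (1 : K) : MvPolynomial (Fin (n + 1)) K)) '' A) := rfl

lemma sup_refine {I : Ideal (MvPolynomial (Fin (n + 1)) K)} {t : ℕ}
    {A : Set (Fin (n + 1) →₀ ℕ)} (hA : spanMon (K := K) A ≤ homogeneousSubmodule (Fin (n + 1)) K t)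
    {f : MvPolynomial (Fin (n + 1)) K} (hf1 : f ∈ homogeneousSubmodule (Fin (n + 1)) K t)
    (hf2 : f ∈ Submodule.restrictScalars K I ⊔ spanMon A) :
    f ∈ (Submodule.restrictScalars K I ⊓ homogeneousSubmodule (Fin (n + 1)) K t) ⊔ spanMon A := by
  obtain ⟨u, hu, v, hv, huv⟩ := Submodule.mem_sup.mp hf2
  refine Submodule.mem_sup.mpr ⟨u, Submodule.mem_inf.mpr ⟨hu, ?_⟩, v, hv, huv⟩
  have : u = f - v := by rw [← huv]; ring
  rw [this]
  exact Submodule.sub_mem _ hf1 (hA hv)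

lemma li_reps_eq_zero {I : Ideal (MvPolynomial (Fin (n + 1)) K)}
    (hLI : LinearIndependent K
      (fun γ : {γ : Fin (n + 1) →₀ ℕ // monomial γ (1 : K) ∉ J} =>
        Ideal.Quotient.mk I (monomial (γ : Fin (n + 1) →₀ ℕ) (1 : K))))
    {f : MvPolynomial (Fin (n + 1)) K} (hfI : f ∈ I)
    (hfN : f ∈ spanMon (K := K) {γ | monomial γ (1 : K) ∉ J}) : f = 0 := by
  classical
  have hLI' : LinearIndependent K
      ((fun γ : Fin (n + 1) →₀ ℕ => Ideal.Quotient.mk I (monomial γ (1 : K)))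
        ∘ ((↑) : {γ : Fin (n + 1) →₀ ℕ | monomial γ (1 : K) ∉ J} → (Fin (n + 1) →₀ ℕ))) := hLI
  rw [linearIndependent_comp_subtype_iff, linearIndepOn_iff] at hLI'
  rw [spanMon_def] at hfN
  obtain ⟨l, hl, hlf⟩ := (Finsupp.mem_span_image_iff_linearCombination K).mp hfN
  set π := (Ideal.Quotient.mkₐ K I).toLinearMap with hπ
  have hπv : (⇑π ∘ fun d : Fin (n + 1) →₀ ℕ => (monomial d (1 : K) :
      MvPolynomial (Fin (n + 1)) K)) = fun γ => Ideal.Quotient.mk I (monomial γ (1 : K)) := by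
    funext γ
    simp [hπ, Ideal.Quotient.mkₐ_eq_mk]
  have hcomb : Finsupp.linearCombination K
      (fun γ : Fin (n + 1) →₀ ℕ => Ideal.Quotient.mk I (monomial γ (1 : K))) l = 0 := by
    rw [← hπv, ← Finsupp.apply_linearCombination, hlf]
    simp [hπ, Ideal.Quotient.mkₐ_eq_mk, Ideal.Quotient.eq_zero_iff_mem.mpr hfI]
  have hl0 : l = 0 := hLI' l hl hcomb
  rw [← hlf, hl0, map_zero]

lemma support_finsupp_sum_subset (c : {γ : Fin (n + 1) →₀ ℕ // monomial γ (1 : K) ∉ J} →₀ K) :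
    ↑(c.sum fun γ a => a • (monomial (γ : Fin (n + 1) →₀ ℕ) (1 : K) :
      MvPolynomial (Fin (n + 1)) K)).support ⊆ {γ : Fin (n + 1) →₀ ℕ | monomial γ (1 : K) ∉ J} := by
  classical
  intro d hd
  rw [Finset.mem_coe] at hd
  rw [Finsupp.sum] at hd
  have := MvPolynomial.support_sum hd
  obtain ⟨γ, hγc, hγd⟩ := Finset.mem_biUnion.mp this
  have : d ∈ ((monomial (γ : Fin (n + 1) →₀ ℕ) ((c γ) • (1:K))).support) := by
    rw [MvPolynomial.smul_monomial] at hγd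
    exact hγd
  rw [support_monomial] at this
  split at this
  · simp at this
  · rw [Finset.mem_singleton] at this
    rw [this]
    exact γ.2

lemma sup_of_quot_span {I : Ideal (MvPolynomial (Fin (n + 1)) K)}
    (F : Set (MvPolynomial (Fin (n + 1)) K)) (hIF : I = Ideal.span F)
    (hFh : ∀ g ∈ F, g ∈ homogeneousSubmodule (Fin (n + 1)) K r)
    (hSpan : Submodule.span K (Set.range
      (fun γ : {γ : Fin (n + 1) →₀ ℕ // monomial γ (1 : K) ∉ J} =>
        Ideal.Quotient.mk I (monomial (γ : Fin (n + 1) →₀ ℕ) (1 : K)))) = ⊤) (t : ℕ) :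
    homogeneousSubmodule (Fin (n + 1)) K t ≤
      (Submodule.restrictScalars K I ⊓ homogeneousSubmodule (Fin (n + 1)) K t)
        ⊔ spanMon (NtSet J t) := by
  classical
  intro f hf
  have hπf : Ideal.Quotient.mk I f ∈ Submodule.span K (Set.range
      (fun γ : {γ : Fin (n + 1) →₀ ℕ // monomial γ (1 : K) ∉ J} =>
        Ideal.Quotient.mk I (monomial (γ : Fin (n + 1) →₀ ℕ) (1 : K)))) := by
    rw [hSpan]; exact Submodule.mem_top
  obtain ⟨c, hc⟩ := Finsupp.mem_span_range_iff_exists_finsupp.mp hπf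
  set g := c.sum fun γ a => a • (monomial (γ : Fin (n + 1) →₀ ℕ) (1 : K) :
    MvPolynomial (Fin (n + 1)) K) with hg
  set π := (Ideal.Quotient.mkₐ K I).toLinearMap with hπ
  have hπg : Ideal.Quotient.mk I g = Ideal.Quotient.mk I f := by
    have : π g = c.sum fun γ a => a • π (monomial (γ : Fin (n + 1) →₀ ℕ) (1 : K)) :=
      map_finsuppSum π c _
    have hπmk : ∀ x : MvPolynomial (Fin (n + 1)) K, π x = Ideal.Quotient.mk I x := by
      intro x; simp [hπ, Ideal.Quotient.mkₐ_eq_mk]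
    rw [hπmk] at this
    rw [this]
    simp_rw [hπmk]
    exact hc
  have hfg : f - g ∈ I := by
    rw [← Ideal.Quotient.eq]
    exact hπg.symm
  have hcompI : homogeneousComponent t (f - g) ∈ I := by
    rw [hIF]
    exact (ideal_comp F hFh (hIF ▸ hfg) t).1
  have hcompN : homogeneousComponent t g ∈ spanMon (K := K) (NtSet J t) := by
    have h1 := comp_mem_spanMon (support_finsupp_sum_subset c) t
    have hseteq : {d ∈ {γ : Fin (n + 1) →₀ ℕ | monomial γ (1 : K) ∉ J} |
        Finsupp.degree d = t} = NtSet J t := by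
      ext d; simp [NtSet, and_comm]
    rwa [hseteq] at h1
  have hsplit : f = homogeneousComponent t (f - g) + homogeneousComponent t g := by
    rw [map_sub, sub_add_cancel, comp_self hf]
  rw [hsplit]
  exact Submodule.add_mem _
    (Submodule.mem_sup_left (Submodule.mem_inf.mpr ⟨hcompI,
      homogeneousComponent_mem t (f - g)⟩))
    (Submodule.mem_sup_right hcompN)

lemma dim_split
    (hJ : J = Ideal.span ((fun a : Fin (n + 1) →₀ ℕ => (monomial a (1 : K) :
      MvPolynomial (Fin (n + 1)) K)) '' ↑B)) (t : ℕ) :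
    Module.finrank K
      ↥(Submodule.restrictScalars K J ⊓ homogeneousSubmodule (Fin (n + 1)) K t)
      + Module.finrank K ↥(spanMon (K := K) (NtSet J t))
      = Module.finrank K ↥(homogeneousSubmodule (Fin (n + 1)) K t) := by
  classical
  rw [J_inf_homog_eq hJ]
  set JS : Set (Fin (n + 1) →₀ ℕ) := {d | Finsupp.degree d = t ∧ monomial d (1 : K) ∈ J}
  haveI hfd1 : FiniteDimensional K (spanMon (K := K) JS) :=
    fd_spanMon ((finite_degree_set t).subset fun d hd => hd.1)
  haveI hfd2 : FiniteDimensional K (spanMon (K := K) (NtSet J t)) :=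
    fd_spanMon ((finite_degree_set t).subset fun d hd => hd.1)
  have hdisj : Disjoint (spanMon (K := K) JS) (spanMon (K := K) (NtSet J t)) := by
    apply spanMon_disjoint
    ext d
    simp only [JS, NtSet, Set.mem_inter_iff, Set.mem_setOf_eq, Set.mem_empty_iff_false,
      iff_false]
    tauto
  have hsup : spanMon (K := K) JS ⊔ spanMon (K := K) (NtSet J t)
      = homogeneousSubmodule (Fin (n + 1)) K t := by
    rw [← spanMon_union]
    have : JS ∪ NtSet J t = {d | Finsupp.degree d = t} := by
      ext d
      simp only [JS, NtSet, Set.mem_union, Set.mem_setOf_eq]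
      tauto
    rw [this, homog_eq_spanMon]
  have hkey := Submodule.finrank_sup_add_finrank_inf_eq
    (spanMon (K := K) JS) (spanMon (K := K) (NtSet J t))
  rw [hsup, disjoint_iff.mp hdisj, finrank_bot] at hkey
  omega

lemma sup_disj_dim {I : Ideal (MvPolynomial (Fin (n + 1)) K)} {t : ℕ}
    (hsup : (Submodule.restrictScalars K I ⊓ homogeneousSubmodule (Fin (n + 1)) K t)
      ⊔ spanMon (K := K) (NtSet J t) = homogeneousSubmodule (Fin (n + 1)) K t)
    (hdisj : Disjoint
      (Submodule.restrictScalars K I ⊓ homogeneousSubmodule (Fin (n + 1)) K t)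
      (spanMon (K := K) (NtSet J t))) :
    Module.finrank K
      ↥(Submodule.restrictScalars K I ⊓ homogeneousSubmodule (Fin (n + 1)) K t)
      + Module.finrank K ↥(spanMon (K := K) (NtSet J t))
      = Module.finrank K ↥(homogeneousSubmodule (Fin (n + 1)) K t) := by
  haveI hfd1 : FiniteDimensional K
      ↥(Submodule.restrictScalars K I ⊓ homogeneousSubmodule (Fin (n + 1)) K t) :=
    Submodule.finiteDimensional_of_le inf_le_right
  haveI hfd2 : FiniteDimensional K (spanMon (K := K) (NtSet J t)) :=
    fd_spanMon ((finite_degree_set t).subset fun d hd => hd.1)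
  have hkey := Submodule.finrank_sup_add_finrank_inf_eq
    (Submodule.restrictScalars K I ⊓ homogeneousSubmodule (Fin (n + 1)) K t)
    (spanMon (K := K) (NtSet J t))
  rw [hsup, disjoint_iff.mp hdisj, finrank_bot] at hkey
  omega

end MainAux


lemma spanMon_mono {K : Type*} [Field K] {A A' : Set (Fin (n + 1) →₀ ℕ)} (h : A ⊆ A') :
    spanMon (K := K) A ≤ spanMon (K := K) A' :=
  Submodule.span_mono (Set.image_mono h)

end Stmt12Aux

open Stmt12Aux

set_option maxHeartbeats 1000000

/-- **Corollary 2.6**: let `J` be a strongly stable ideal generated by `s` monomials of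
degree `r` with `dim_K (S/J)_t = p t` for all `t ≥ r`, and let `I` be a homogeneous ideal
generated by its degree-`r` component. Then `I_r` is a complement of `⟨N(J)_r⟩` in `S_r`
with `dim_K (S/I)_t = p t` for all `t ≥ r` (i.e. `I ∈ H_J`) if and only if `I` is generated
by a `J`-marked basis: a marked set `{x^α − T α : x^α ∈ B}` with `T α` homogeneous of degree
`r` supported on `N(J)`, such that the classes of the monomials of `N(J)` form a `K`-basis
of `S/I`.  (Quotient dimensions are encoded as `dim I_t + p t = dim S_t`.) -/
theorem stmt_12 {K : Type*} [Field K] {n : ℕ} (r s : ℕ) (p : ℕ → ℕ)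
    (B : Finset (Fin (n + 1) →₀ ℕ)) (hBcard : B.card = s)
    (hBdeg : ∀ α ∈ B, α.sum (fun _ e => e) = r)
    (J : Ideal (MvPolynomial (Fin (n + 1)) K))
    (hJ : J = Ideal.span ((fun a : Fin (n + 1) →₀ ℕ => (monomial a (1 : K) :
      MvPolynomial (Fin (n + 1)) K)) '' ↑B))
    (hSS : ∀ β : Fin (n + 1) →₀ ℕ, monomial β (1 : K) ∈ J →
      ∀ i j : Fin (n + 1), i < j → β i ≠ 0 →
        monomial (β - Finsupp.single i 1 + Finsupp.single j 1) (1 : K) ∈ J)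
    (hJp : ∀ t : ℕ, r ≤ t →
      Module.finrank K
        ↥(Submodule.restrictScalars K J ⊓ homogeneousSubmodule (Fin (n + 1)) K t) + p t
      = Module.finrank K ↥(homogeneousSubmodule (Fin (n + 1)) K t))
    (I : Ideal (MvPolynomial (Fin (n + 1)) K))
    (hI : I = Ideal.span
      ((Submodule.restrictScalars K I ⊓ homogeneousSubmodule (Fin (n + 1)) K r :
        Submodule K (MvPolynomial (Fin (n + 1)) K)) : Set (MvPolynomial (Fin (n + 1)) K))) :
    (Disjoint
        (Submodule.restrictScalars K I ⊓ homogeneousSubmodule (Fin (n + 1)) K r)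
        (Submodule.span K ((fun γ : Fin (n + 1) →₀ ℕ => (monomial γ (1 : K) :
          MvPolynomial (Fin (n + 1)) K)) '' {γ | γ.sum (fun _ e => e) = r ∧ γ ∉ B})) ∧
      (Submodule.restrictScalars K I ⊓ homogeneousSubmodule (Fin (n + 1)) K r)
        ⊔ Submodule.span K ((fun γ : Fin (n + 1) →₀ ℕ => (monomial γ (1 : K) :
          MvPolynomial (Fin (n + 1)) K)) '' {γ | γ.sum (fun _ e => e) = r ∧ γ ∉ B})
        = homogeneousSubmodule (Fin (n + 1)) K r ∧
      (∀ t : ℕ, r ≤ t →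
        Module.finrank K
          ↥(Submodule.restrictScalars K I ⊓ homogeneousSubmodule (Fin (n + 1)) K t) + p t
        = Module.finrank K ↥(homogeneousSubmodule (Fin (n + 1)) K t)))
    ↔ (∃ T : (Fin (n + 1) →₀ ℕ) → MvPolynomial (Fin (n + 1)) K,
        (∀ α ∈ B, T α ∈ homogeneousSubmodule (Fin (n + 1)) K r ∧
          ∀ γ ∈ (T α).support, monomial γ (1 : K) ∉ J) ∧
        I = Ideal.span ((fun α : Fin (n + 1) →₀ ℕ =>
          (monomial α (1 : K) : MvPolynomial (Fin (n + 1)) K) - T α) '' ↑B) ∧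
        LinearIndependent K
          (fun γ : {γ : Fin (n + 1) →₀ ℕ // monomial γ (1 : K) ∉ J} =>
            Ideal.Quotient.mk I (monomial (γ : Fin (n + 1) →₀ ℕ) (1 : K))) ∧
        Submodule.span K (Set.range
          (fun γ : {γ : Fin (n + 1) →₀ ℕ // monomial γ (1 : K) ∉ J} =>
            Ideal.Quotient.mk I (monomial (γ : Fin (n + 1) →₀ ℕ) (1 : K)))) = ⊤) := by
  classical
  have hset : {γ : Fin (n + 1) →₀ ℕ | γ.sum (fun _ e => e) = r ∧ γ ∉ B} = NtSet J r := by
    ext γ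
    simp only [Set.mem_setOf_eq, NtSet, degree_sum_eq]
    constructor
    · rintro ⟨h1, h2⟩
      exact ⟨h1, fun hJm => h2 ((memJ_degree_r_iff hJ hBdeg h1).mp hJm)⟩
    · rintro ⟨h1, h2⟩
      exact ⟨h1, fun hB => h2 ((memJ_degree_r_iff hJ hBdeg h1).mpr hB)⟩
  have hspan_eq : Submodule.span K ((fun γ : Fin (n + 1) →₀ ℕ => (monomial γ (1 : K) :
        MvPolynomial (Fin (n + 1)) K)) '' {γ | γ.sum (fun _ e => e) = r ∧ γ ∉ B})
      = spanMon (NtSet J r) := by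
    rw [spanMon_def, hset]
  rw [hspan_eq]
  have hNle : ∀ t : ℕ, spanMon (K := K) (NtSet J t) ≤ homogeneousSubmodule (Fin (n + 1)) K t :=
    fun t => spanMon_le_homog fun d hd => hd.1
  constructor
  · rintro ⟨hdisj_r, hsup_r, hdims⟩
    have hdecomp : ∀ α ∈ B, ∃ v, v ∈ spanMon (K := K) (NtSet J r)
        ∧ monomial α (1 : K) - v ∈ I := by
      intro α hαB
      have hmem : monomial α (1 : K) ∈ homogeneousSubmodule (Fin (n + 1)) K r := by
        rw [mem_homogeneousSubmodule]
        exact isHomogeneous_monomial _ (by rw [← degree_sum_eq]; exact hBdeg α hαB)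
      rw [← hsup_r] at hmem
      obtain ⟨u, hu, v, hv, huv⟩ := Submodule.mem_sup.mp hmem
      refine ⟨v, hv, ?_⟩
      have : monomial α (1 : K) - v = u := by rw [← huv]; ring
      rw [this]
      exact (Submodule.mem_inf.mp hu).1
    choose! T hTv hTI using hdecomp
    have hThomog : ∀ α ∈ B, T α ∈ homogeneousSubmodule (Fin (n + 1)) K r := fun α h =>
      hNle r (hTv α h)
    have hTsupp : ∀ α ∈ B, ∀ γ ∈ (T α).support, monomial γ (1 : K) ∉ J := by
      intro α h γ hγ
      exact (mem_spanMon_iff.mp (hTv α h) (Finset.mem_coe.mpr hγ)).2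
    have hT : ∀ α ∈ B, (monomial α (1 : K) - T α ∈ I)
        ∧ T α ∈ homogeneousSubmodule (Fin (n + 1)) K r
        ∧ ∀ γ ∈ (T α).support, monomial γ (1 : K) ∉ J :=
      fun α h => ⟨hTI α h, hThomog α h, hTsupp α h⟩
    have hFh : ∀ g ∈ (fun α : Fin (n + 1) →₀ ℕ =>
        (monomial α (1 : K) : MvPolynomial (Fin (n + 1)) K) - T α) '' ↑B,
        g ∈ homogeneousSubmodule (Fin (n + 1)) K r := by
      rintro g ⟨α, hα, rfl⟩
      refine Submodule.sub_mem _ ?_ (hThomog α hα)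
      rw [mem_homogeneousSubmodule]
      exact isHomogeneous_monomial _ (by rw [← degree_sum_eq]; exact hBdeg α hα)
    have hFI : ∀ g ∈ (fun α : Fin (n + 1) →₀ ℕ =>
        (monomial α (1 : K) : MvPolynomial (Fin (n + 1)) K) - T α) '' ↑B, g ∈ I := by
      rintro g ⟨α, hα, rfl⟩
      exact hTI α hα
    have hIF : I = Ideal.span ((fun α : Fin (n + 1) →₀ ℕ =>
        (monomial α (1 : K) : MvPolynomial (Fin (n + 1)) K) - T α) '' ↑B) := by
      apply le_antisymm
      · conv_lhs => rw [hI]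
        apply Ideal.span_le.mpr
        intro f hf
        have hfIr : f ∈ Submodule.restrictScalars K I
            ⊓ homogeneousSubmodule (Fin (n + 1)) K r := hf
        obtain ⟨hfI', hfh⟩ := Submodule.mem_inf.mp hfIr
        have hJSunion : {d : Fin (n + 1) →₀ ℕ | Finsupp.degree d = r}
            = {d | Finsupp.degree d = r ∧ monomial d (1 : K) ∈ J} ∪ NtSet J r := by
          ext d
          simp only [NtSet, Set.mem_union, Set.mem_setOf_eq]
          tauto
        have hfh2 : f ∈ spanMon (K := K) {d | Finsupp.degree d = r ∧ monomial d (1 : K) ∈ J}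
            ⊔ spanMon (NtSet J r) := by
          have := hfh
          rw [homog_eq_spanMon, hJSunion, spanMon_union] at this
          exact this
        obtain ⟨fJ, hfJ, fN, hfN, hsum⟩ := Submodule.mem_sup.mp hfh2
        have hfJB : ∀ d ∈ fJ.support, d ∈ B := by
          intro d hd
          have := mem_spanMon_iff.mp hfJ (Finset.mem_coe.mpr hd)
          exact (memJ_degree_r_iff hJ hBdeg this.1).mp this.2
        have hfJ_eq : fJ = ∑ d ∈ fJ.support, coeff d fJ • (monomial d (1 : K) :
            MvPolynomial (Fin (n + 1)) K) := by
          conv_lhs => rw [← support_sum_monomial_coeff fJ]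
          exact Finset.sum_congr rfl fun d _ => by rw [smul_monomial, smul_eq_mul, mul_one]
        have hgI : (∑ d ∈ fJ.support, coeff d fJ • ((monomial d (1 : K) :
            MvPolynomial (Fin (n + 1)) K) - T d))
            ∈ Submodule.restrictScalars K (Ideal.span ((fun α : Fin (n + 1) →₀ ℕ =>
              (monomial α (1 : K) : MvPolynomial (Fin (n + 1)) K) - T α) '' ↑B)) := by
          apply Submodule.sum_mem
          intro d hd
          apply Submodule.smul_mem
          exact Ideal.subset_span ⟨d, hfJB d hd, rfl⟩
        have hfg : f - (∑ d ∈ fJ.support, coeff d fJ • ((monomial d (1 : K) :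
            MvPolynomial (Fin (n + 1)) K) - T d)) ∈ spanMon (K := K) (NtSet J r) := by
          have e1 : ∑ d ∈ fJ.support, coeff d fJ • ((monomial d (1 : K) :
              MvPolynomial (Fin (n + 1)) K) - T d)
              = fJ - ∑ d ∈ fJ.support, coeff d fJ • T d := by
            simp only [smul_sub]
            rw [Finset.sum_sub_distrib, ← hfJ_eq]
          have hrw : f - (∑ d ∈ fJ.support, coeff d fJ • ((monomial d (1 : K) :
              MvPolynomial (Fin (n + 1)) K) - T d))
              = fN + ∑ d ∈ fJ.support, coeff d fJ • T d := by
            rw [e1, ← hsum]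
            ring
          rw [hrw]
          refine Submodule.add_mem _ hfN (Submodule.sum_mem _ fun d hd => ?_)
          exact Submodule.smul_mem _ _ (hTv d (hfJB d hd))
        have hfgI : f - (∑ d ∈ fJ.support, coeff d fJ • ((monomial d (1 : K) :
            MvPolynomial (Fin (n + 1)) K) - T d)) ∈ I := by
          apply Submodule.sub_mem _ hfI'
          apply Submodule.sum_mem
          intro d hd
          exact Submodule.smul_mem (Submodule.restrictScalars K I) _ (hTI d (hfJB d hd))
        have hzero : f - (∑ d ∈ fJ.support, coeff d fJ • ((monomial d (1 : K) :
            MvPolynomial (Fin (n + 1)) K) - T d)) = 0 := by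
          apply Submodule.disjoint_def.mp hdisj_r _ _ hfg
          exact Submodule.mem_inf.mpr ⟨hfgI, hNle r hfg⟩
        have : f = ∑ d ∈ fJ.support, coeff d fJ • ((monomial d (1 : K) :
            MvPolynomial (Fin (n + 1)) K) - T d) := by
          rw [← sub_eq_zero]
          exact hzero
        rw [this]
        exact hgI
      · exact Ideal.span_le.mpr hFI
    have hsupt : ∀ t, r ≤ t →
        (Submodule.restrictScalars K I ⊓ homogeneousSubmodule (Fin (n + 1)) K t)
          ⊔ spanMon (NtSet J t) = homogeneousSubmodule (Fin (n + 1)) K t := by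
      intro t ht
      apply le_antisymm (sup_le inf_le_right (hNle t))
      intro f hf
      apply sup_refine (hNle t) hf
      rw [show f = ∑ d ∈ f.support, coeff d f • (monomial d (1 : K) :
          MvPolynomial (Fin (n + 1)) K) from by
        conv_lhs => rw [← support_sum_monomial_coeff f]
        exact Finset.sum_congr rfl fun d _ => by rw [smul_monomial, smul_eq_mul, mul_one]]
      apply Submodule.sum_mem
      intro d hd
      apply Submodule.smul_mem
      have hdt : Finsupp.degree d = t := support_degree_of_homog hf hd
      have := reduce hJ hBdeg hSS I T hT d (by rw [hdt]; exact ht)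
      rwa [hdt] at this
    have hdisjt : ∀ t, r ≤ t →
        Disjoint (Submodule.restrictScalars K I ⊓ homogeneousSubmodule (Fin (n + 1)) K t)
          (spanMon (K := K) (NtSet J t)) := by
      intro t ht
      haveI hfd1 : FiniteDimensional K
          ↥(Submodule.restrictScalars K I ⊓ homogeneousSubmodule (Fin (n + 1)) K t) :=
        Submodule.finiteDimensional_of_le inf_le_right
      haveI hfd2 : FiniteDimensional K (spanMon (K := K) (NtSet J t)) :=
        fd_spanMon ((finite_degree_set t).subset fun d hd => hd.1)
      have h1 := hdims t ht
      have h2 := hJp t ht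
      have h3 := dim_split hJ t
      have hkey := Submodule.finrank_sup_add_finrank_inf_eq
        (Submodule.restrictScalars K I ⊓ homogeneousSubmodule (Fin (n + 1)) K t)
        (spanMon (K := K) (NtSet J t))
      rw [hsupt t ht] at hkey
      haveI hfd3 : FiniteDimensional K
          ↥((Submodule.restrictScalars K I ⊓ homogeneousSubmodule (Fin (n + 1)) K t)
            ⊓ spanMon (K := K) (NtSet J t)) :=
        Submodule.finiteDimensional_of_le (le_trans inf_le_left inf_le_right)
      rw [disjoint_iff]
      apply Submodule.finrank_eq_zero.mp
      omega
    refine ⟨T, fun α hα => ⟨hThomog α hα, hTsupp α hα⟩, hIF, ?_, ?_⟩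
    · show LinearIndependent K
        ((fun γ : Fin (n + 1) →₀ ℕ => Ideal.Quotient.mk I (monomial γ (1 : K)))
          ∘ ((↑) : {γ : Fin (n + 1) →₀ ℕ | monomial γ (1 : K) ∉ J} → (Fin (n + 1) →₀ ℕ)))
      rw [linearIndependent_comp_subtype_iff, linearIndepOn_iff]
      intro l hl hcomb
      set g := Finsupp.linearCombination K (fun d : Fin (n + 1) →₀ ℕ =>
        (monomial d (1 : K) : MvPolynomial (Fin (n + 1)) K)) l with hgdef
      have hπv : (⇑(Ideal.Quotient.mkₐ K I).toLinearMap ∘ fun d : Fin (n + 1) →₀ ℕ =>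
          (monomial d (1 : K) : MvPolynomial (Fin (n + 1)) K))
          = fun γ => Ideal.Quotient.mk I (monomial γ (1 : K)) := by
        funext γ
        simp [Ideal.Quotient.mkₐ_eq_mk]
      have hgI : g ∈ I := by
        rw [← Ideal.Quotient.eq_zero_iff_mem]
        have : Ideal.Quotient.mk I g = (Ideal.Quotient.mkₐ K I).toLinearMap g := by
          simp [Ideal.Quotient.mkₐ_eq_mk]
        rw [this, hgdef, Finsupp.apply_linearCombination, hπv]
        exact hcomb
      have hgsupp : ↑g.support ⊆ {γ : Fin (n + 1) →₀ ℕ | monomial γ (1 : K) ∉ J} := by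
        intro d hd
        rw [Finset.mem_coe] at hd
        rw [hgdef, Finsupp.linearCombination_apply, Finsupp.sum] at hd
        obtain ⟨γ, hγc, hγd⟩ := Finset.mem_biUnion.mp (MvPolynomial.support_sum hd)
        have : d ∈ ((monomial γ ((l γ) • (1 : K))).support) := by
          rw [MvPolynomial.smul_monomial] at hγd
          exact hγd
        rw [support_monomial] at this
        split at this
        · simp at this
        · rw [Finset.mem_singleton] at this
          rw [this]
          exact (Finsupp.mem_supported K l).mp hl hγc
      have hg0 : g = 0 := by
        have hcomps : ∀ t, homogeneousComponent t g = 0 := by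
          intro t
          rcases lt_or_ge t r with hlt | hge
          · exact (ideal_comp _ hFh (by rw [← hIF]; exact hgI) t).2 hlt
          · have hcN : homogeneousComponent t g ∈ spanMon (K := K) (NtSet J t) := by
              have h1 := comp_mem_spanMon hgsupp t
              have hseteq : {d ∈ {γ : Fin (n + 1) →₀ ℕ | monomial γ (1 : K) ∉ J} |
                  Finsupp.degree d = t} = NtSet J t := by
                ext d; simp [NtSet, and_comm]
              rwa [hseteq] at h1
            have hcI : homogeneousComponent t g ∈ Submodule.restrictScalars K I
                ⊓ homogeneousSubmodule (Fin (n + 1)) K t := by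
              refine Submodule.mem_inf.mpr ⟨?_, homogeneousComponent_mem t g⟩
              have := (ideal_comp _ hFh (by rw [← hIF]; exact hgI) t).1
              rw [← hIF] at this
              exact this
            exact Submodule.disjoint_def.mp (hdisjt t hge) _ hcI hcN
        rw [← sum_homogeneousComponent g]
        exact Finset.sum_eq_zero fun i _ => hcomps i
      have hbasis := (basisMonomials (Fin (n + 1)) K).linearIndependent
      rw [coe_basisMonomials] at hbasis
      exact linearIndependent_iff.mp hbasis l (by rw [← hgdef]; exact hg0)
    · rw [eq_top_iff]
      intro x _
      obtain ⟨f, rfl⟩ := Ideal.Quotient.mk_surjective x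
      have hmk : ∀ h : MvPolynomial (Fin (n + 1)) K,
          Ideal.Quotient.mk I h = (Ideal.Quotient.mkₐ K I).toLinearMap h := by
        intro h; simp [Ideal.Quotient.mkₐ_eq_mk]
      rw [hmk f]
      rw [show f = ∑ d ∈ f.support, coeff d f • (monomial d (1 : K) :
          MvPolynomial (Fin (n + 1)) K) from by
        conv_lhs => rw [← support_sum_monomial_coeff f]
        exact Finset.sum_congr rfl fun d _ => by rw [smul_monomial, smul_eq_mul, mul_one]]
      rw [map_sum]
      apply Submodule.sum_mem
      intro d _
      rw [map_smul]
      apply Submodule.smul_mem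
      by_cases hdJ : monomial d (1 : K) ∈ J
      · have hdr : r ≤ Finsupp.degree d := by
          by_contra hlt
          exact not_memJ_of_degree_lt hJ hBdeg (by omega) hdJ
        obtain ⟨u, hu, v, hv, huv⟩ :=
          Submodule.mem_sup.mp (reduce hJ hBdeg hSS I T hT d hdr)
        have hπu : (Ideal.Quotient.mkₐ K I).toLinearMap u = 0 := by
          rw [← hmk u]
          exact Ideal.Quotient.eq_zero_iff_mem.mpr hu
        have : (Ideal.Quotient.mkₐ K I).toLinearMap (monomial d (1 : K))
            = (Ideal.Quotient.mkₐ K I).toLinearMap v := by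
          rw [← huv, map_add, hπu, zero_add]
        rw [this]
        have himg : (⇑(Ideal.Quotient.mkₐ K I).toLinearMap '' ((fun d' : Fin (n + 1) →₀ ℕ =>
            (monomial d' (1 : K) : MvPolynomial (Fin (n + 1)) K)) '' NtSet J (Finsupp.degree d)))
            ⊆ Set.range (fun γ : {γ : Fin (n + 1) →₀ ℕ // monomial γ (1 : K) ∉ J} =>
              Ideal.Quotient.mk I (monomial (γ : Fin (n + 1) →₀ ℕ) (1 : K))) := by
          rintro _ ⟨_, ⟨γ, hγ, rfl⟩, rfl⟩
          exact ⟨⟨γ, hγ.2⟩, (hmk _).symm⟩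
        refine Submodule.span_mono himg ?_
        rw [← Submodule.map_span]
        exact Submodule.mem_map_of_mem hv
      · exact Submodule.subset_span ⟨⟨d, hdJ⟩, (hmk _).symm⟩
  · rintro ⟨T, hTprop, hIeq, hLI, hSpan⟩
    have hFh : ∀ g ∈ (fun α : Fin (n + 1) →₀ ℕ =>
        (monomial α (1 : K) : MvPolynomial (Fin (n + 1)) K) - T α) '' ↑B,
        g ∈ homogeneousSubmodule (Fin (n + 1)) K r := by
      rintro g ⟨α, hα, rfl⟩
      refine Submodule.sub_mem _ ?_ ((hTprop α hα).1)
      rw [mem_homogeneousSubmodule]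
      exact isHomogeneous_monomial _ (by rw [← degree_sum_eq]; exact hBdeg α hα)
    have hdisjt : ∀ t,
        Disjoint (Submodule.restrictScalars K I ⊓ homogeneousSubmodule (Fin (n + 1)) K t)
          (spanMon (K := K) (NtSet J t)) := by
      intro t
      rw [Submodule.disjoint_def]
      intro x hx1 hx2
      apply li_reps_eq_zero hLI (Submodule.mem_inf.mp hx1).1
      exact spanMon_mono (fun d hd => hd.2) hx2
    have hsupt : ∀ t,
        (Submodule.restrictScalars K I ⊓ homogeneousSubmodule (Fin (n + 1)) K t)
          ⊔ spanMon (NtSet J t) = homogeneousSubmodule (Fin (n + 1)) K t := by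
      intro t
      apply le_antisymm (sup_le inf_le_right (hNle t))
      exact sup_of_quot_span _ hIeq hFh hSpan t
    refine ⟨hdisjt r, hsupt r, ?_⟩
    intro t ht
    have h3 := dim_split hJ t
    have h2 := hJp t ht
    have hdd := sup_disj_dim (hsupt t) (hdisjt t)
    omega
end

section
/- Let J ⊆ S = K[x_0,…,x_n] be a strongly stable monomial ideal all of whose minimal monomial generators have degree ≤ m. Let x^γ be a monomial of degree m not belonging to J and let x_i be a variable such that x_i·x^γ ∈ J. Then, writing x_h = min(x_i·x^γ) for the smallest variable dividing x_i·x^γ, one has x_h < x_i and the monomial (x_i·x^γ)/x_h belongs to J. -/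
open MvPolynomial

private lemma mono_mem_of_le {K : Type*} [Field K] {n : ℕ}
    {J : Ideal (MvPolynomial (Fin (n + 1)) K)} {α δ : Fin (n + 1) →₀ ℕ}
    (hαJ : monomial α (1 : K) ∈ J) (hle : α ≤ δ) : monomial δ (1 : K) ∈ J := by
  have : (monomial δ (1 : K) : MvPolynomial (Fin (n+1)) K)
      = monomial (δ - α) 1 * monomial α 1 := by
    rw [monomial_mul, one_mul, tsub_add_cancel_of_le hle]
  rw [this]
  exact Ideal.mul_mem_left _ _ hαJ

/-- The key rewriting step in the proof of **Theorem 3.3** (combining Lemma 1.4(i),(ii)):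
let `J` be a strongly stable monomial ideal whose minimal generators have degree `≤ m`,
let `x^γ` be a monomial of degree `m` with `x^γ ∉ J` and `x_i·x^γ ∈ J`. If `x_h` is the
smallest variable dividing `x_i·x^γ`, then `x_h < x_i` and `(x_i·x^γ)/x_h ∈ J`. -/
theorem stmt_14 {K : Type*} [Field K] {n : ℕ} (m : ℕ)
    (B : Set (Fin (n + 1) →₀ ℕ))
    (hBdeg : ∀ α ∈ B, α.sum (fun _ e => e) ≤ m)
    (J : Ideal (MvPolynomial (Fin (n + 1)) K))
    (hJ : J = Ideal.span ((fun a : Fin (n + 1) →₀ ℕ => (monomial a (1 : K) :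
      MvPolynomial (Fin (n + 1)) K)) '' B))
    (hSS : ∀ β : Fin (n + 1) →₀ ℕ, monomial β (1 : K) ∈ J →
      ∀ i j : Fin (n + 1), i < j → β i ≠ 0 →
        monomial (β - Finsupp.single i 1 + Finsupp.single j 1) (1 : K) ∈ J)
    (γ : Fin (n + 1) →₀ ℕ) (hγdeg : γ.sum (fun _ e => e) = m)
    (hγ : monomial γ (1 : K) ∉ J)
    (i : Fin (n + 1))
    (hmem : monomial (γ + Finsupp.single i 1) (1 : K) ∈ J)
    (h : Fin (n + 1)) (hh : (γ + Finsupp.single i 1 : Fin (n + 1) →₀ ℕ) h ≠ 0)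
    (hhmin : ∀ j : Fin (n + 1), (γ + Finsupp.single i 1 : Fin (n + 1) →₀ ℕ) j ≠ 0 → h ≤ j) :
    h < i ∧ monomial (γ + Finsupp.single i 1 - Finsupp.single h 1) (1 : K) ∈ J := by
  classical
  set δ : Fin (n + 1) →₀ ℕ := γ + Finsupp.single i 1 with hδ
  -- extract a generator dividing δ
  obtain ⟨α, hαB, hαle⟩ : ∃ α ∈ B, α ≤ δ := by
    have := hJ ▸ hmem
    rw [mem_ideal_span_monomial_image] at this
    refine this δ ?_
    simp [support_monomial]
  have hαJ : monomial α (1 : K) ∈ J := by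
    rw [hJ]; exact Ideal.subset_span ⟨α, hαB, rfl⟩
  have hαle' : ∀ k, α k ≤ δ k := fun k => hαle k
  -- degrees as finite sums
  have sum_eq : ∀ f : Fin (n + 1) →₀ ℕ, f.sum (fun _ e => e) = ∑ k, f k := by
    intro f; exact Finsupp.sum_fintype _ _ (fun _ => rfl)
  have hδdeg : ∑ k, δ k = m + 1 := by
    rw [← sum_eq]
    have : δ.sum (fun _ e => e) = γ.sum (fun _ e => e)
        + (Finsupp.single i 1 : Fin (n+1) →₀ ℕ).sum (fun _ e => e) :=
      Finsupp.sum_add_index' (fun _ => rfl) (fun _ _ _ => rfl)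
    rw [this, hγdeg, Finsupp.sum_single_index rfl]
  have hαdeg : ∑ k, α k ≤ m := by rw [← sum_eq]; exact hBdeg α hαB
  -- there is a coordinate with strict slack
  obtain ⟨j, hj⟩ : ∃ j, α j < δ j := by
    by_contra hcon
    push_neg at hcon
    have : ∀ k, α k = δ k := fun k => le_antisymm (hαle' k) (hcon k)
    have : ∑ k, α k = ∑ k, δ k := Finset.sum_congr rfl (fun k _ => this k)
    omega
  -- α is not ≤ γ, so α i = γ i + 1
  have hαγ : ¬ α ≤ γ := fun hle => hγ (mono_mem_of_le hαJ hle)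
  obtain ⟨k, hk⟩ : ∃ k, γ k < α k := by
    by_contra hcon; push_neg at hcon
    exact hαγ (fun k => hcon k)
  have hki : k = i := by
    have := hαle' k
    by_contra hne
    have : δ k = γ k := by
      simp [hδ, Finsupp.single_apply, Ne.symm hne]
    omega
  subst hki
  have hαi : α k = γ k + 1 := by
    have h1 := hαle' k
    have : δ k = γ k + 1 := by simp [hδ]
    omega
  -- h ≤ i
  have hhi : h ≤ k := hhmin k (by simp [hδ])
  -- the slack coordinate j is not i
  have hji : j ≠ k := by
    intro e; subst e
    have : δ j = γ j + 1 := by simp [hδ]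
    omega
  have hhj : h ≤ j := hhmin j (by omega)
  have hδv : ∀ l, δ l = γ l + if k = l then 1 else 0 := by
    intro l
    simp [hδ, Finsupp.single_apply]
  -- prove h < i
  have hlt : h < k := by
    rcases lt_or_eq_of_le hhi with hlt | heq
    · exact hlt
    · -- h = i : derive contradiction via strong stability pushing α i → j
      exfalso
      subst heq
      have hij : h < j := lt_of_le_of_ne hhj (Ne.symm hji)
      have hmem' := hSS α hαJ h j hij (by omega)
      apply hγ
      refine mono_mem_of_le hmem' ?_
      intro l
      simp only [Finsupp.add_apply, Finsupp.tsub_apply, Finsupp.single_apply]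
      have h1 := hαle' l
      have h2 := hδv l
      by_cases e1 : h = l
      · subst e1
        rw [if_pos rfl, if_neg (Ne.symm (ne_of_lt hij))]
        simp only [if_pos rfl, if_true] at h2
        omega
      · rw [if_neg e1]
        simp only [if_neg e1] at h2
        by_cases e2 : j = l
        · subst e2
          rw [if_pos rfl]
          have h3 := hδv j
          simp only [if_neg e1] at h3
          omega
        · rw [if_neg e2]
          omega
  refine ⟨hlt, ?_⟩
  -- second part: (δ - e_h) ∈ J
  have hhk : h ≠ k := ne_of_lt hlt
  by_cases hcase : α h < δ h
  · -- α still divides δ - e_h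
    refine mono_mem_of_le hαJ ?_
    intro l
    simp only [Finsupp.tsub_apply, Finsupp.single_apply]
    have h1 := hαle' l
    by_cases e1 : h = l
    · subst e1; rw [if_pos rfl]; omega
    · rw [if_neg e1]; omega
  · -- α h = δ h > 0; use strong stability α : h → j
    have hαh : α h = δ h := by have := hαle' h; omega
    have hjh : j ≠ h := by intro e; subst e; omega
    have hhj' : h < j := lt_of_le_of_ne hhj (Ne.symm hjh)
    have hmem' := hSS α hαJ h j hhj' (by omega)
    refine mono_mem_of_le hmem' ?_
    intro l
    simp only [Finsupp.add_apply, Finsupp.tsub_apply, Finsupp.single_apply]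
    have h1 := hαle' l
    by_cases e1 : h = l
    · subst e1
      simp only [if_pos rfl, if_true, if_neg hjh]
      have : δ h ≠ 0 := hh
      omega
    · simp only [if_neg e1]
      by_cases e2 : j = l
      · subst e2
        simp only [if_pos rfl, if_true]
        omega
      · simp only [if_neg e2]
        omega
end
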